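/- arXiv:2109.06666 — 12 statements merged into one kernel-verified Lean document; each statement's English description precedes it below -/
import Mathlib

section
/- Let f be a minimum-weight restrained double Roman dominating function of a graph G for which the set V_0 = {v : f(v) = 0} has maximum cardinality among all minimum-weight RDRD functions. Then V_1 = {v : f(v) = 1} is an independent set, and no vertex of V_1 has a neighbor in V_0. -/
open Finset

/-- A restrained double Roman dominating function. -/
def IsRDRD {V : Type*} (G : SimpleGraph V) (f : V → ℕ) : Prop :=
  (∀ v, f v ≤ 3) ∧
  (∀ v, f v = 0 →
    (∃ u, G.Adj v u ∧ f u = 3) ∨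
    (∃ u w, G.Adj v u ∧ G.Adj v w ∧ u ≠ w ∧ f u = 2 ∧ f w = 2)) ∧
  (∀ v, f v = 1 → ∃ u, G.Adj v u ∧ 2 ≤ f u) ∧
  (∀ v, f v = 0 → ∃ u, G.Adj v u ∧ f u = 0)

/-- The restrained double Roman domination number. -/
noncomputable def rdrNum {V : Type*} [Fintype V] (G : SimpleGraph V) : ℕ :=
  sInf {k | ∃ f : V → ℕ, IsRDRD G f ∧ ∑ v, f v = k}

def IsDomSet {V : Type*} (G : SimpleGraph V) (S : Set V) : Prop :=
  ∀ v ∉ S, ∃ u ∈ S, G.Adj v u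

def IsRDomSet {V : Type*} (G : SimpleGraph V) (S : Set V) : Prop :=
  IsDomSet G S ∧ ∀ v ∉ S, ∃ u ∉ S, G.Adj v u

def IsR2DomSet {V : Type*} (G : SimpleGraph V) (S : Set V) : Prop :=
  (∀ v ∉ S, ∃ u w, u ∈ S ∧ w ∈ S ∧ u ≠ w ∧ G.Adj v u ∧ G.Adj v w) ∧
  ∀ v ∉ S, ∃ u ∉ S, G.Adj v u

noncomputable def domNum {V : Type*} [Fintype V] (G : SimpleGraph V) : ℕ :=
  sInf {k | ∃ S : Finset V, IsDomSet G ↑S ∧ S.card = k}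

noncomputable def rDomNum {V : Type*} [Fintype V] (G : SimpleGraph V) : ℕ :=
  sInf {k | ∃ S : Finset V, IsRDomSet G ↑S ∧ S.card = k}

noncomputable def r2DomNum {V : Type*} [Fintype V] (G : SimpleGraph V) : ℕ :=
  sInf {k | ∃ S : Finset V, IsR2DomSet G ↑S ∧ S.card = k}

/-- A restrained Roman dominating function. -/
def IsRRD {V : Type*} (G : SimpleGraph V) (f : V → ℕ) : Prop :=
  (∀ v, f v ≤ 2) ∧
  (∀ v, f v = 0 → ∃ u, G.Adj v u ∧ f u = 2) ∧
  (∀ v, f v = 0 → ∃ u, G.Adj v u ∧ f u = 0)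

noncomputable def rrNum {V : Type*} [Fintype V] (G : SimpleGraph V) : ℕ :=
  sInf {k | ∃ f : V → ℕ, IsRRD G f ∧ ∑ v, f v = k}

/-- A star: all edges are incident to one common vertex. -/
def IsStar {V : Type*} (G : SimpleGraph V) : Prop :=
  ∃ x : V, ∀ ⦃a b : V⦄, G.Adj a b → a = x ∨ b = x

/-- The join of two graphs. -/
def joinG {α β : Type*} (G : SimpleGraph α) (H : SimpleGraph β) : SimpleGraph (α ⊕ β) :=
  SimpleGraph.fromRel (fun x y => match x, y with
    | Sum.inl a, Sum.inl b => G.Adj a b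
    | Sum.inr a, Sum.inr b => H.Adj a b
    | Sum.inl _, Sum.inr _ => True
    | Sum.inr _, Sum.inl _ => True)

/-- The disjoint union of two graphs. -/
def dUnion {α β : Type*} (G : SimpleGraph α) (H : SimpleGraph β) : SimpleGraph (α ⊕ β) :=
  SimpleGraph.fromRel (fun x y => match x, y with
    | Sum.inl a, Sum.inl b => G.Adj a b
    | Sum.inr a, Sum.inr b => H.Adj a b
    | _, _ => False)

lemma rdrd_transfer {V : Type*} (G : SimpleGraph V) (f g : V → ℕ)
    (hf : IsRDRD G f)
    (ha : ∀ v, g v ≤ 3)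
    (hb : ∀ v, f v = 0 → g v = 0)
    (hc : ∀ v, 2 ≤ f v → g v = f v ∨ g v = 3)
    (he : ∀ v, g v = 1 → f v = 1)
    (hd : ∀ v, g v = 0 → f v ≠ 0 →
      (∃ u, G.Adj v u ∧ g u = 3) ∧ (∃ u, G.Adj v u ∧ g u = 0)) :
    IsRDRD G g := by
  obtain ⟨h1, h2, h3, h4⟩ := hf
  refine ⟨ha, ?_, ?_, ?_⟩
  · intro v hv
    by_cases hfv : f v = 0
    · rcases h2 v hfv with ⟨u, hadj, hu3⟩ | ⟨u, w, hau, haw, huw, hu2, hw2⟩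
      · exact Or.inl ⟨u, hadj, (hc u (by omega)).elim (fun h => by omega) id⟩
      · rcases hc u (by omega) with hgu | hgu
        · rcases hc w (by omega) with hgw | hgw
          · exact Or.inr ⟨u, w, hau, haw, huw, by omega, by omega⟩
          · exact Or.inl ⟨w, haw, hgw⟩
        · exact Or.inl ⟨u, hau, hgu⟩
    · exact Or.inl (hd v hv hfv).1
  · intro v hv
    obtain ⟨u, hadj, hu⟩ := h3 v (he v hv)
    exact ⟨u, hadj, by rcases hc u hu with h | h <;> omega⟩
  · intro v hv
    by_cases hfv : f v = 0
    · obtain ⟨u, hadj, hu⟩ := h4 v hfv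
      exact ⟨u, hadj, hb u hu⟩
    · exact (hd v hv hfv).2

lemma finisher {V : Type*} [Fintype V] (G : SimpleGraph V) (f g : V → ℕ)
    (hmin : ∑ v, f v = rdrNum G)
    (hmax : ∀ h : V → ℕ, IsRDRD G h → ∑ v, h v = rdrNum G →
      (Finset.univ.filter (fun v => h v = 0)).card ≤
        (Finset.univ.filter (fun v => f v = 0)).card)
    (hg : IsRDRD G g) (hle : ∑ v, g v ≤ ∑ v, f v)
    (hb : ∀ v, f v = 0 → g v = 0)
    (u : V) (hu0 : g u = 0) (hu : f u ≠ 0) : False := by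
  have hmem : rdrNum G ≤ ∑ v, g v := Nat.sInf_le ⟨g, hg, rfl⟩
  have heq : ∑ v, g v = rdrNum G := le_antisymm (hmin ▸ hle) hmem
  have hcard := hmax g hg heq
  have hss : (Finset.univ.filter (fun v => f v = 0)) ⊂
      (Finset.univ.filter (fun v => g v = 0)) := by
    constructor
    · intro x hx
      simp only [Finset.mem_filter, Finset.mem_univ, true_and] at *
      exact hb x hx
    · intro hsub
      have hu' : u ∈ Finset.univ.filter (fun v => g v = 0) := by simp [hu0]
      have := hsub hu'
      simp only [Finset.mem_filter, Finset.mem_univ, true_and] at this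
      exact hu this
  exact absurd hcard (not_le.mpr (Finset.card_lt_card hss))

lemma sum_off {V : Type*} [Fintype V] [DecidableEq V] (f g : V → ℕ) (S : Finset V)
    (h : ∀ x ∉ S, g x = f x) :
    ∑ x, g x + ∑ x ∈ S, f x = ∑ x, f x + ∑ x ∈ S, g x := by
  have h1 := Finset.sum_compl_add_sum S g
  have h2 := Finset.sum_compl_add_sum S f
  have h3 : ∑ x ∈ Sᶜ, g x = ∑ x ∈ Sᶜ, f x :=
    Finset.sum_congr rfl (fun x hx => h x (by simpa using hx))
  omega

theorem stmt_1 {V : Type*} [Fintype V] (G : SimpleGraph V)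
    (f : V → ℕ) (hf : IsRDRD G f) (hmin : ∑ v, f v = rdrNum G)
    (hmax : ∀ g : V → ℕ, IsRDRD G g → ∑ v, g v = rdrNum G →
      (Finset.univ.filter (fun v => g v = 0)).card ≤
        (Finset.univ.filter (fun v => f v = 0)).card) :
    (∀ u v : V, f u = 1 → f v = 1 → ¬ G.Adj u v) ∧
    (∀ u v : V, f u = 1 → f v = 0 → ¬ G.Adj u v) := by
  classical
  constructor
  · -- V₁ is independent
    intro u v hu1 hv1 hadj
    have huv : u ≠ v := G.ne_of_adj hadj
    obtain ⟨z, hazu, hz2⟩ := hf.2.2.1 u hu1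
    obtain ⟨z', hazv, hz'2⟩ := hf.2.2.1 v hv1
    have hzu : z ≠ u := fun h => by rw [h] at hz2; omega
    have hzv : z ≠ v := fun h => by rw [h] at hz2; omega
    have hz'u : z' ≠ u := fun h => by rw [h] at hz'2; omega
    have hz'v : z' ≠ v := fun h => by rw [h] at hz'2; omega
    set g : V → ℕ := fun x =>
      if x = u then 0 else if x = v then 0 else
      if x = z then 3 else if x = z' then 3 else f x with hgdef
    have hgu : g u = 0 := by simp [hgdef]
    have hgv : g v = 0 := by simp [hgdef, Ne.symm huv]
    have hgz : g z = 3 := by simp [hgdef, hzu, hzv]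
    have hgz' : g z' = 3 := by
      simp only [hgdef]
      rw [if_neg hz'u, if_neg hz'v]
      split_ifs <;> rfl
    have hb : ∀ x, f x = 0 → g x = 0 := by
      intro x hx
      simp only [hgdef]
      split_ifs with h1 h2 h3 h4
      · rfl
      · rfl
      · subst h3; omega
      · subst h4; omega
      · exact hx
    have hg : IsRDRD G g := by
      refine rdrd_transfer G f g hf ?_ hb ?_ ?_ ?_
      · intro x
        simp only [hgdef]
        split_ifs
        · omega
        · omega
        · omega
        · omega
        · exact hf.1 x
      · intro x hx
        simp only [hgdef]
        split_ifs with h1 h2 h3 h4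
        · subst h1; omega
        · subst h2; omega
        · exact Or.inr rfl
        · exact Or.inr rfl
        · exact Or.inl rfl
      · intro x hx
        simp only [hgdef] at hx
        split_ifs at hx <;> try omega
      · intro x hx0 hfx
        simp only [hgdef] at hx0
        split_ifs at hx0 with h1 h2 h3 h4
        · subst h1
          exact ⟨⟨z, hazu, hgz⟩, ⟨v, hadj, hgv⟩⟩
        · subst h2
          exact ⟨⟨z', hazv, hgz'⟩, ⟨u, hadj.symm, hgu⟩⟩
        · exact absurd hx0 hfx
    have hle : ∑ x, g x ≤ ∑ x, f x := by
      have hoff : ∀ x ∉ ({u, v, z, z'} : Finset V), g x = f x := by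
        intro x hx
        simp only [Finset.mem_insert, Finset.mem_singleton, not_or] at hx
        simp [hgdef, hx.1, hx.2.1, hx.2.2.1, hx.2.2.2]
      have hkey := sum_off f g ({u, v, z, z'} : Finset V) hoff
      by_cases hzz : z = z'
      · subst hzz
        have hset : ({u, v, z, z} : Finset V) = {u, v, z} := by
          simp
        rw [hset] at hkey
        rw [Finset.sum_insert (by simp [huv, Ne.symm hzu]),
            Finset.sum_insert (by simp [Ne.symm hzv]),
            Finset.sum_singleton, Finset.sum_insert (by simp [huv, Ne.symm hzu]),
            Finset.sum_insert (by simp [Ne.symm hzv]), Finset.sum_singleton] at hkey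
        rw [hgu, hgv, hgz] at hkey
        omega
      · rw [Finset.sum_insert (by simp [huv, Ne.symm hzu, Ne.symm hz'u]),
            Finset.sum_insert (by simp [Ne.symm hzv, Ne.symm hz'v]),
            Finset.sum_insert (by simp [hzz]), Finset.sum_singleton,
            Finset.sum_insert (by simp [huv, Ne.symm hzu, Ne.symm hz'u]),
            Finset.sum_insert (by simp [Ne.symm hzv, Ne.symm hz'v]),
            Finset.sum_insert (by simp [hzz]), Finset.sum_singleton] at hkey
        rw [hgu, hgv, hgz, hgz'] at hkey
        omega
    exact finisher G f g hmin hmax hg hle hb u hgu (by omega)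
  · -- no edge between V₁ and V₀
    intro u w hu1 hw0 hadj
    obtain ⟨z, hazu, hz2⟩ := hf.2.2.1 u hu1
    have hzu : z ≠ u := fun h => by rw [h] at hz2; omega
    set g : V → ℕ := fun x => if x = u then 0 else if x = z then 3 else f x with hgdef
    have hgu : g u = 0 := by simp [hgdef]
    have hgz : g z = 3 := by simp [hgdef, hzu]
    have hb : ∀ x, f x = 0 → g x = 0 := by
      intro x hx
      simp only [hgdef]
      split_ifs with h1 h2
      · rfl
      · subst h2; omega
      · exact hx
    have hg : IsRDRD G g := by
      refine rdrd_transfer G f g hf ?_ hb ?_ ?_ ?_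
      · intro x
        simp only [hgdef]
        split_ifs
        · omega
        · omega
        · exact hf.1 x
      · intro x hx
        simp only [hgdef]
        split_ifs with h1 h2
        · subst h1; omega
        · exact Or.inr rfl
        · exact Or.inl rfl
      · intro x hx
        simp only [hgdef] at hx
        split_ifs at hx <;> try omega
      · intro x hx0 hfx
        simp only [hgdef] at hx0
        split_ifs at hx0 with h1 h2
        · subst h1
          exact ⟨⟨z, hazu, hgz⟩, ⟨w, hadj, hb w hw0⟩⟩
        · exact absurd hx0 hfx
    have hle : ∑ x, g x ≤ ∑ x, f x := by
      have hoff : ∀ x ∉ ({u, z} : Finset V), g x = f x := by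
        intro x hx
        simp only [Finset.mem_insert, Finset.mem_singleton, not_or] at hx
        simp [hgdef, hx.1, hx.2]
      have hkey := sum_off f g ({u, z} : Finset V) hoff
      rw [Finset.sum_insert (by simp [Ne.symm hzu]), Finset.sum_singleton,
          Finset.sum_insert (by simp [Ne.symm hzu]), Finset.sum_singleton] at hkey
      rw [hgu, hgz] at hkey
      omega
    exact finisher G f g hmin hmax hg hle hb u hgu (by omega)
end

section
/- For any graph G of order n with maximum degree Δ ≥ 1, γ_rdR(G) ≥ (2n + (Δ − 2)·γ_r(G)) / Δ. -/
open Finset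

lemma deg_two' {V : Type*} [Fintype V] (G : SimpleGraph V) [DecidableRel G.Adj]
    (v u u' : V) (h1 : G.Adj v u) (h2 : G.Adj v u') (hne : u ≠ u') :
    2 ≤ G.degree v := by
  classical
  have hsub : ({u, u'} : Finset V) ⊆ G.neighborFinset v := by
    intro x hx
    simp only [Finset.mem_insert, Finset.mem_singleton] at hx
    rcases hx with rfl | rfl <;> simp [h1, h2]
  calc 2 = ({u, u'} : Finset V).card := by
        rw [Finset.card_insert_of_notMem (by simp [hne]), Finset.card_singleton]
    _ ≤ _ := Finset.card_le_card hsub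


lemma rdr_exists {V : Type*} [Fintype V] (G : SimpleGraph V) :
    ∃ f : V → ℕ, IsRDRD G f ∧ ∑ v, f v = rdrNum G := by
  have hne : {k | ∃ f : V → ℕ, IsRDRD G f ∧ ∑ v, f v = k}.Nonempty :=
    ⟨∑ _v : V, 2, fun _ => 2,
      ⟨fun v => by norm_num, fun v h => by simp at h, fun v h => by simp at h,
       fun v h => by simp at h⟩, rfl⟩
  exact Nat.sInf_mem hne

theorem stmt_2 {V : Type*} [Fintype V] (G : SimpleGraph V) [DecidableRel G.Adj]
    (hΔ : 1 ≤ G.maxDegree) :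
    (2 * (Fintype.card V : ℝ) + ((G.maxDegree : ℝ) - 2) * (rDomNum G : ℝ)) / (G.maxDegree : ℝ)
      ≤ (rdrNum G : ℝ) := by
  classical
  obtain ⟨f, ⟨hf3, hf0, hf1, hf0'⟩, hw⟩ := rdr_exists G
  have hΔpos : (0:ℝ) < (G.maxDegree : ℝ) := by exact_mod_cast hΔ
  rw [div_le_iff₀ hΔpos]
  by_cases hΔ2 : 2 ≤ G.maxDegree
  · -- main case Δ ≥ 2
    set S : Finset V := univ.filter (fun v => ¬ f v = 0) with hSdef
    set Z : Finset V := univ.filter (fun v => f v = 0) with hZdef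
    have hRD : IsRDomSet G ↑S := by
      constructor
      · intro v hv
        have hv0 : f v = 0 := by
          by_contra h
          exact hv (by simp [hSdef, h])
        rcases hf0 v hv0 with ⟨u, hadj, hu⟩ | ⟨u, w', hadj, _, _, hu, _⟩
        · exact ⟨u, by simp [hSdef, hu], hadj⟩
        · exact ⟨u, by simp [hSdef, hu], hadj⟩
      · intro v hv
        have hv0 : f v = 0 := by
          by_contra h
          exact hv (by simp [hSdef, h])
        obtain ⟨u, hadj, hu⟩ := hf0' v hv0
        exact ⟨u, by simp [hSdef, hu], hadj⟩
    have hγ : rDomNum G ≤ S.card := Nat.sInf_le ⟨S, hRD, rfl⟩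
    set g : V → ℕ := fun u => f u - 1 with hgdef
    have key : ∀ v ∈ Z, 2 ≤ ∑ u ∈ G.neighborFinset v, g u := by
      intro v hv
      have hv0 : f v = 0 := by simpa [hZdef] using hv
      rcases hf0 v hv0 with ⟨u, hadj, hu⟩ | ⟨u, w', hadj, hadj', hne, hu, hw'⟩
      · have hmem : u ∈ G.neighborFinset v := by simpa using hadj
        have : g u = 2 := by simp [hgdef, hu]
        calc 2 = g u := this.symm
          _ ≤ _ := Finset.single_le_sum (fun _ _ => Nat.zero_le _) hmem
      · have hsub : ({u, w'} : Finset V) ⊆ G.neighborFinset v := by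
          intro x hx
          simp only [Finset.mem_insert, Finset.mem_singleton] at hx
          rcases hx with rfl | rfl <;> simpa
        have h2 : ∑ x ∈ ({u, w'} : Finset V), g x = 2 := by
          rw [Finset.sum_insert (by simp [hne]), Finset.sum_singleton]
          simp [hgdef, hu, hw']
        calc 2 = ∑ x ∈ ({u, w'} : Finset V), g x := h2.symm
          _ ≤ _ := Finset.sum_le_sum_of_subset hsub
    have count : 2 * Z.card ≤ G.maxDegree * (∑ u, g u) := by
      have cardle : ∀ u : V, (Z.filter (fun v => G.Adj v u)).card ≤ G.maxDegree := by
        intro u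
        have hsub : Z.filter (fun v => G.Adj v u) ⊆ G.neighborFinset u := by
          intro v hv
          simp only [Finset.mem_filter] at hv
          simpa using hv.2.symm
        exact le_trans (Finset.card_le_card hsub) (G.degree_le_maxDegree u)
      calc 2 * Z.card = ∑ _v ∈ Z, 2 := by rw [Finset.sum_const, smul_eq_mul, mul_comm]
        _ ≤ ∑ v ∈ Z, ∑ u ∈ G.neighborFinset v, g u := Finset.sum_le_sum key
        _ = ∑ v ∈ Z, ∑ u, if G.Adj v u then g u else 0 := by
            refine Finset.sum_congr rfl fun v _ => ?_
            rw [SimpleGraph.neighborFinset_eq_filter, Finset.sum_filter]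
        _ = ∑ u, ∑ v ∈ Z, if G.Adj v u then g u else 0 := Finset.sum_comm
        _ = ∑ u, (Z.filter (fun v => G.Adj v u)).card * g u := by
            refine Finset.sum_congr rfl fun u _ => ?_
            rw [← Finset.sum_filter, Finset.sum_const, smul_eq_mul]
        _ ≤ ∑ u, G.maxDegree * g u :=
            Finset.sum_le_sum fun u _ => Nat.mul_le_mul_right _ (cardle u)
        _ = G.maxDegree * ∑ u, g u := by rw [Finset.mul_sum]
    have hsum : (∑ u, g u) + S.card = rdrNum G := by
      have e1 : ∑ u, g u = ∑ u ∈ S, g u :=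
        (Finset.sum_subset (Finset.subset_univ S) (fun u _ hu => by
          have : f u = 0 := by simpa [hSdef] using hu
          simp [hgdef, this])).symm
      have e2 : ∑ u ∈ S, (g u + 1) = ∑ u ∈ S, f u := by
        refine Finset.sum_congr rfl fun u hu => ?_
        have : ¬ f u = 0 := by simpa [hSdef] using hu
        simp only [hgdef]
        omega
      have e3 : ∑ u ∈ S, f u = ∑ u, f u :=
        Finset.sum_subset (Finset.subset_univ S) (fun u _ hu => by
          simpa [hSdef] using hu)
      have e4 : ∑ u ∈ S, (g u + 1) = ∑ u ∈ S, g u + S.card := by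
        rw [Finset.sum_add_distrib, Finset.sum_const, smul_eq_mul, mul_one]
      rw [e1, ← hw, ← e3, ← e2, e4]
    have hpart : Z.card + S.card = Fintype.card V := by
      rw [hZdef, hSdef]
      rw [Finset.card_filter_add_card_filter_not, Finset.card_univ]
    -- now real arithmetic
    have c1 : (2:ℝ) * Z.card ≤ (G.maxDegree:ℝ) * (∑ u, g u) := by exact_mod_cast count
    have c2 : ((∑ u, g u : ℕ):ℝ) + (S.card:ℝ) = (rdrNum G : ℝ) := by exact_mod_cast hsum
    have c3 : (Z.card:ℝ) + (S.card:ℝ) = (Fintype.card V : ℝ) := by exact_mod_cast hpart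
    have c4 : (rDomNum G : ℝ) ≤ (S.card:ℝ) := by exact_mod_cast hγ
    have c5 : (2:ℝ) ≤ (G.maxDegree:ℝ) := by exact_mod_cast hΔ2
    have c6 : ((G.maxDegree:ℝ) - 2) * (rDomNum G : ℝ) ≤ ((G.maxDegree:ℝ) - 2) * (S.card:ℝ) :=
      mul_le_mul_of_nonneg_left c4 (by linarith)
    have c7 : (rdrNum G : ℝ) * (G.maxDegree:ℝ)
        = (G.maxDegree:ℝ) * (∑ u, g u : ℕ) + (G.maxDegree:ℝ) * (S.card:ℝ) := by
      rw [← c2]; ring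
    nlinarith [c1, c3, c6, c7]
  · -- case Δ = 1
    have hΔ1 : G.maxDegree = 1 := by omega
    have hfpos : ∀ v, 1 ≤ f v := by
      intro v
      by_contra h
      have hv0 : f v = 0 := by omega
      obtain ⟨u, hadj, hu0⟩ := hf0' v hv0
      have : ∃ u', G.Adj v u' ∧ ¬ f u' = 0 := by
        rcases hf0 v hv0 with ⟨u', hadj', hu'⟩ | ⟨u', _, hadj', _, _, hu', _⟩
        · exact ⟨u', hadj', by omega⟩
        · exact ⟨u', hadj', by omega⟩
      obtain ⟨u', hadj', hu'⟩ := this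
      have hne : u ≠ u' := by rintro rfl; exact hu' hu0
      have h2 := deg_two' G v u u' hadj hadj' hne
      have := G.degree_le_maxDegree v
      omega
    have hwn : Fintype.card V ≤ rdrNum G := by
      rw [← hw]
      calc Fintype.card V = ∑ _v : V, 1 := by simp
        _ ≤ ∑ v, f v := Finset.sum_le_sum (fun v _ => hfpos v)
    have hmem : rDomNum G ∈ {k | ∃ S : Finset V, IsRDomSet G ↑S ∧ S.card = k} := by
      apply Nat.sInf_mem
      exact ⟨(univ : Finset V).card, univ,
        ⟨fun v hv => absurd (by simp : v ∈ ((univ : Finset V) : Set V)) hv,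
         fun v hv => absurd (by simp : v ∈ ((univ : Finset V) : Set V)) hv⟩, rfl⟩
    obtain ⟨S, hSrd, hScard⟩ := hmem
    have hSuniv : S = univ := by
      by_contra h
      have : ∃ v, v ∉ S := by
        by_contra hh
        push_neg at hh
        exact h (Finset.eq_univ_iff_forall.mpr hh)
      obtain ⟨v, hv⟩ := this
      have hv' : v ∉ (↑S : Set V) := by simpa using hv
      obtain ⟨u, huS, hadj⟩ := hSrd.1 v hv'
      obtain ⟨u', hu'S, hadj'⟩ := hSrd.2 v hv'
      have hne : u ≠ u' := by rintro rfl; exact hu'S huS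
      have h2 := deg_two' G v u u' hadj hadj' hne
      have := G.degree_le_maxDegree v
      omega
    have hγn : rDomNum G = Fintype.card V := by
      rw [← hScard, hSuniv, Finset.card_univ]
    have cw : (Fintype.card V : ℝ) ≤ (rdrNum G : ℝ) := by exact_mod_cast hwn
    rw [hγn, hΔ1]
    push_cast
    linarith
end

section
/- For any graph G of order n with no isolated vertices, γ_rdR(G) ≤ n + γ(G), where γ(G) is the domination number of G. -/
open Finset

theorem stmt_3 {V : Type*} [Fintype V] (G : SimpleGraph V)
    (h : ∀ v : V, ∃ u, G.Adj v u) :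
    rdrNum G ≤ Fintype.card V + domNum G := by
  classical
  have hne : {k | ∃ S : Finset V, IsDomSet G ↑S ∧ S.card = k}.Nonempty := by
    exact ⟨(Finset.univ : Finset V).card, Finset.univ, by intro v hv; simp at hv, rfl⟩
  obtain ⟨S, hS, hcard⟩ := Nat.sInf_mem hne
  set f : V → ℕ := fun v => if v ∈ S then 2 else 1 with hf
  have hrdrd : IsRDRD G f := by
    refine ⟨fun v => ?_, fun v hv => ?_, fun v hv => ?_, fun v hv => ?_⟩
    · simp only [hf]; split <;> omega
    · simp only [hf] at hv; split at hv <;> omega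
    · simp only [hf] at hv
      by_cases hvS : v ∈ S
      · simp [hvS] at hv
      · obtain ⟨u, huS, hadj⟩ := hS v hvS
        exact ⟨u, hadj, by simp [hf, Finset.mem_coe.mp huS]⟩
    · simp only [hf] at hv; split at hv <;> omega
  have hsum : ∑ v, f v = Fintype.card V + S.card := by
    have : ∀ v, f v = 1 + (if v ∈ S then 1 else 0) := by
      intro v; simp only [hf]; split <;> rfl
    rw [Finset.sum_congr rfl (fun v _ => this v), Finset.sum_add_distrib]
    simp [Finset.sum_boole, Finset.filter_mem_eq_inter]
  calc rdrNum G ≤ ∑ v, f v := Nat.sInf_le ⟨f, hrdrd, rfl⟩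
    _ = Fintype.card V + S.card := hsum
    _ = Fintype.card V + domNum G := by rw [hcard]; rfl
end

section
/- Let G be a graph with no isolated vertices on n vertices v_1,…,v_n, and let H be obtained from G by attaching two new pendant vertices (leaves) to each vertex v_i. Then γ_rdR(H) = 4n. -/
open Finset

/-- The graph obtained from `G` by attaching two new pendant vertices to each vertex. -/
def attachTwoLeaves {V : Type*} (G : SimpleGraph V) : SimpleGraph (V ⊕ V × Fin 2) :=
  SimpleGraph.fromRel (fun x y => match x, y with
    | Sum.inl a, Sum.inl b => G.Adj a b
    | Sum.inl a, Sum.inr p => p.1 = a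
    | _, _ => False)

lemma leaf_adj_iff {V : Type*} (G : SimpleGraph V) (p : V × Fin 2) (u : V ⊕ V × Fin 2) :
    (attachTwoLeaves G).Adj (Sum.inr p) u ↔ u = Sum.inl p.1 := by
  constructor
  · rintro ⟨hne, h | h⟩
    · cases u <;> simp_all [attachTwoLeaves]
    · cases u <;> simp_all [attachTwoLeaves]
  · rintro rfl
    exact ⟨by simp, Or.inr rfl⟩

lemma center_adj_leaf {V : Type*} (G : SimpleGraph V) (v : V) (i : Fin 2) :
    (attachTwoLeaves G).Adj (Sum.inl v) (Sum.inr (v, i)) :=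
  ((attachTwoLeaves G).adj_symm ((leaf_adj_iff G (v, i) (Sum.inl v)).mpr rfl))

theorem stmt_4 {V : Type*} [Fintype V] (G : SimpleGraph V)
    (h : ∀ v : V, ∃ u, G.Adj v u) :
    rdrNum (attachTwoLeaves G) = 4 * Fintype.card V := by
  have hmem : (4 * Fintype.card V) ∈
      {k | ∃ f : V ⊕ V × Fin 2 → ℕ, IsRDRD (attachTwoLeaves G) f ∧ ∑ v, f v = k} := by
    refine ⟨Sum.elim (fun _ => 2) (fun _ => 1), ⟨?_, ?_, ?_, ?_⟩, ?_⟩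
    · rintro (v | p) <;> simp
    · rintro (v | p) hv <;> simp at hv
    · rintro (v | p) hv
      · simp at hv
      · exact ⟨Sum.inl p.1, (leaf_adj_iff G p _).mpr rfl, by simp⟩
    · rintro (v | p) hv <;> simp at hv
    · rw [Fintype.sum_sum_type]
      simp [Finset.sum_const, Fintype.card_prod]
      ring
  refine le_antisymm (Nat.sInf_le hmem) (le_csInf ⟨_, hmem⟩ ?_)
  rintro k ⟨f, ⟨hb, h0, h1, hr⟩, rfl⟩
  -- every leaf has value ≥ 1
  have hleaf : ∀ p : V × Fin 2, 1 ≤ f (Sum.inr p) := by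
    intro p
    by_contra hlt
    push_neg at hlt
    interval_cases hp : f (Sum.inr p)
    have hz := hp
    rcases hr _ hz with ⟨u, hu, hu0⟩
    rw [leaf_adj_iff] at hu; subst hu
    rcases h0 _ hz with ⟨u, hu, hu3⟩ | ⟨u, w, hu, hw, hne, _, _⟩
    · rw [leaf_adj_iff] at hu; subst hu; omega
    · rw [leaf_adj_iff] at hu hw; subst hu; subst hw; exact hne rfl
  have key : ∀ v : V, 4 ≤ f (Sum.inl v) + (f (Sum.inr (v, 0)) + f (Sum.inr (v, 1))) := by
    intro v
    have hcase : ∀ i : Fin 2, 2 ≤ f (Sum.inr (v, i)) ∨ 2 ≤ f (Sum.inl v) := by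
      intro i
      by_cases h2 : 2 ≤ f (Sum.inr (v, i))
      · exact Or.inl h2
      · have h1' : f (Sum.inr (v, i)) = 1 := by have := hleaf (v, i); omega
        rcases h1 _ h1' with ⟨u, hu, hu2⟩
        rw [leaf_adj_iff] at hu; subst hu
        exact Or.inr hu2
    have := hleaf (v, 0); have := hleaf (v, 1)
    have := hcase 0; have := hcase 1
    omega
  calc 4 * Fintype.card V = ∑ _v : V, 4 := by simp [mul_comm]
    _ ≤ ∑ v : V, (f (Sum.inl v) + (f (Sum.inr (v, 0)) + f (Sum.inr (v, 1)))) :=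
        Finset.sum_le_sum fun v _ => key v
    _ = ∑ v, f v := by
        rw [Fintype.sum_sum_type, Finset.sum_add_distrib, Fintype.sum_prod_type]
        simp [Fin.sum_univ_two]
end

section
/- Let r ≥ 3 be an integer and let G be an r-regular graph of order n with girth at least 6. Then γ_rdR(G) ≤ 2(n − r²) + 1. -/
open Finset

open SimpleGraph

private lemma cycle_len_ge6 {V : Type*} {G : SimpleGraph V} (hg : 6 ≤ G.girth) :
    ∀ (a : V) (w : G.Walk a a), w.IsCycle → 6 ≤ w.length := by
  intro a w hw
  have h1 : G.egirth ≠ ⊤ := by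
    intro h
    simp [SimpleGraph.girth, h] at hg
  have h2 : (6 : ℕ∞) ≤ G.egirth := by
    rw [← ENat.coe_toNat h1]
    exact_mod_cast hg
  have := SimpleGraph.le_egirth.mp h2 a w hw
  exact_mod_cast this

private lemma no_tri {V : Type*} {G : SimpleGraph V}
    (h6 : ∀ (a : V) (w : G.Walk a a), w.IsCycle → 6 ≤ w.length)
    {a b c : V} (hab : G.Adj a b) (hbc : G.Adj b c) (hca : G.Adj c a) : False := by
  have hw : (Walk.cons hab (Walk.cons hbc (Walk.cons hca Walk.nil))).IsCycle := by
    rw [SimpleGraph.Walk.isCycle_def, SimpleGraph.Walk.isTrail_def]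
    refine ⟨?_, by simp, ?_⟩ <;>
      simp_all [Sym2.eq_iff, hab.ne, hbc.ne, hca.ne, hab.ne', hbc.ne', hca.ne']
  have := h6 a _ hw
  simp at this


open SimpleGraph

private lemma no_c4 {V : Type*} {G : SimpleGraph V}
    (h6 : ∀ (a : V) (w : G.Walk a a), w.IsCycle → 6 ≤ w.length)
    {a b c d : V} (hab : G.Adj a b) (hbc : G.Adj b c) (hcd : G.Adj c d)
    (hda : G.Adj d a) (hac : a ≠ c) (hbd : b ≠ d) : False := by
  have hw : (Walk.cons hab (Walk.cons hbc (Walk.cons hcd (Walk.cons hda Walk.nil)))).IsCycle := by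
    rw [SimpleGraph.Walk.isCycle_def, SimpleGraph.Walk.isTrail_def]
    refine ⟨?_, by simp, ?_⟩ <;>
      simp_all [Sym2.eq_iff, hab.ne, hbc.ne, hcd.ne, hda.ne, hab.ne', hbc.ne', hcd.ne', hda.ne',
        hac, hbd, hac.symm, hbd.symm]
  have := h6 a _ hw
  simp at this

private lemma no_c5 {V : Type*} {G : SimpleGraph V}
    (h6 : ∀ (a : V) (w : G.Walk a a), w.IsCycle → 6 ≤ w.length)
    {a b c d e : V} (hab : G.Adj a b) (hbc : G.Adj b c) (hcd : G.Adj c d)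
    (hde : G.Adj d e) (hea : G.Adj e a)
    (hac : a ≠ c) (had : a ≠ d) (hbd : b ≠ d) (hbe : b ≠ e) (hce : c ≠ e) : False := by
  have hw : (Walk.cons hab (Walk.cons hbc (Walk.cons hcd (Walk.cons hde
      (Walk.cons hea Walk.nil))))).IsCycle := by
    rw [SimpleGraph.Walk.isCycle_def, SimpleGraph.Walk.isTrail_def]
    refine ⟨?_, by simp, ?_⟩ <;>
      simp_all [Sym2.eq_iff, hab.ne, hbc.ne, hcd.ne, hde.ne, hea.ne,
        hab.ne', hbc.ne', hcd.ne', hde.ne', hea.ne',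
        hac, had, hbd, hbe, hce, hac.symm, had.symm, hbd.symm, hbe.symm, hce.symm]
  have := h6 a _ hw
  simp at this

theorem stmt_5 {V : Type*} [Fintype V] (G : SimpleGraph V) [DecidableRel G.Adj]
    (r : ℕ) (hr : 3 ≤ r) (hreg : G.IsRegularOfDegree r) (hg : 6 ≤ G.girth) :
    (rdrNum G : ℤ) ≤ 2 * ((Fintype.card V : ℤ) - (r : ℤ) ^ 2) + 1 := by
  classical
  have h6 := cycle_len_ge6 hg
  -- there is a vertex
  have hcyc : ¬ G.IsAcyclic := by
    intro h
    rw [← SimpleGraph.girth_eq_zero] at h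
    omega
  obtain ⟨v, -, -, -⟩ := SimpleGraph.exists_girth_eq_length.mpr hcyc
  -- the RDRD function
  set f : V → ℕ := fun x =>
    if x = v then 3
    else if G.Adj v x ∨ (∃ u, G.Adj v u ∧ G.Adj u x) then 0 else 2 with hfdef
  have hfv : f v = 3 := by simp [hfdef]
  have hf0 : ∀ x, x ≠ v → (G.Adj v x ∨ (∃ u, G.Adj v u ∧ G.Adj u x)) → f x = 0 := by
    intro x hx h
    simp [hfdef, hx, h]
  -- any y ≠ v adjacent to some u ∈ N(v) has f y = 0
  have hfN2 : ∀ u y, G.Adj v u → G.Adj u y → y ≠ v → f y = 0 := by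
    intro u y hvu huy hyv
    exact hf0 y hyv (by
      by_cases h : G.Adj v y
      · exact Or.inl h
      · exact Or.inr ⟨u, hvu, huy⟩)
  have hfN1 : ∀ y, G.Adj v y → f y = 0 := fun y h => hf0 y h.ne' (Or.inl h)
  -- values of f
  have hval : ∀ x, f x = 0 ∨ f x = 2 ∨ f x = 3 := by
    intro x
    simp only [hfdef]
    split_ifs <;> simp
  -- key: a vertex at distance exactly 2 has ≥ 2 neighbors with value 2
  have hkey : ∀ x, x ≠ v → ¬ G.Adj v x → ∀ u, G.Adj v u → G.Adj u x →
      ∃ w1 w2, G.Adj x w1 ∧ G.Adj x w2 ∧ w1 ≠ w2 ∧ f w1 = 2 ∧ f w2 = 2 := by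
    intro x hxv hvx u hvu hux
    have hsub : {u} ⊆ G.neighborFinset x := by
      simp [SimpleGraph.mem_neighborFinset, hux.symm]
    have hcard : 1 < (G.neighborFinset x \ {u}).card := by
      rw [Finset.card_sdiff_of_subset hsub, SimpleGraph.card_neighborFinset_eq_degree, hreg x]
      simp
      omega
    obtain ⟨w1, hw1, w2, hw2, hne⟩ := Finset.one_lt_card.mp hcard
    simp only [Finset.mem_sdiff, SimpleGraph.mem_neighborFinset, Finset.mem_singleton] at hw1 hw2
    have hval2 : ∀ w, G.Adj x w → w ≠ u → f w = 2 := by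
      intro w hxw hwu
      have hwv : w ≠ v := by
        rintro rfl
        exact hvx hxw.symm
      have hnadj : ¬ G.Adj v w := by
        intro hvw
        exact no_c4 h6 hvu hux hxw hvw.symm hxv.symm (fun h => hwu h.symm)
      have hnex : ¬ ∃ u', G.Adj v u' ∧ G.Adj u' w := by
        rintro ⟨u', hvu', hu'w⟩
        by_cases huu : u' = u
        · subst huu
          exact no_tri h6 hux hxw hu'w.symm
        · -- 5-cycle v u x w u'
          refine no_c5 h6 hvu hux hxw hu'w.symm hvu'.symm hxv.symm hwv.symm hwu.symm
            (fun h => huu h.symm) ?_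
          rintro rfl
          exact hvx hvu'
      simp [hfdef, hwv, hnadj, hnex]
    exact ⟨w1, w2, hw1.1, hw2.1, hne, hval2 w1 hw1.1 hw1.2, hval2 w2 hw2.1 hw2.2⟩
  -- f is an RDRD function
  have hrdrd : IsRDRD G f := by
    refine ⟨?_, ?_, ?_, ?_⟩
    · intro x
      simp only [hfdef]
      split_ifs <;> omega
    · intro x hx
      have hxv : x ≠ v := by
        rintro rfl
        rw [hfv] at hx
        omega
      simp only [hfdef, if_neg hxv] at hx
      split_ifs at hx with h
      · by_cases hvx : G.Adj v x
        · exact Or.inl ⟨v, hvx.symm, hfv⟩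
        · obtain ⟨u, hvu, hux⟩ := h.resolve_left hvx
          obtain ⟨w1, w2, h1, h2, h3, h4, h5⟩ := hkey x hxv hvx u hvu hux
          exact Or.inr ⟨w1, w2, h1, h2, h3, h4, h5⟩
    · intro x hx
      rcases hval x with h | h | h <;> omega
    · intro x hx
      have hxv : x ≠ v := by
        rintro rfl
        rw [hfv] at hx
        omega
      simp only [hfdef, if_neg hxv] at hx
      split_ifs at hx with h
      rcases h with hvx | ⟨u, hvu, hux⟩
      · -- x ∈ N(v): find a neighbor of x other than v
        have hcard : 1 < (G.neighborFinset x).card := by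
          rw [SimpleGraph.card_neighborFinset_eq_degree, hreg x]
          omega
        obtain ⟨y, hy, hyv⟩ := Finset.exists_mem_ne hcard v
        rw [SimpleGraph.mem_neighborFinset] at hy
        exact ⟨y, hy, hfN2 x y hvx hy hyv⟩
      · exact ⟨u, hux.symm, hfN1 u hvu⟩
  -- the weight of f
  have hmem : rdrNum G ≤ ∑ x, f x := Nat.sInf_le ⟨f, hrdrd, rfl⟩
  -- the zero set is large
  set T : Finset V := Finset.univ.filter (fun x => f x = 0) with hT
  set D : Finset V := G.neighborFinset v ∪
      (G.neighborFinset v).biUnion (fun u => G.neighborFinset u \ {v}) with hD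
  have hDT : D ⊆ T := by
    intro y hy
    simp only [hD, Finset.mem_union, Finset.mem_biUnion, Finset.mem_sdiff,
      SimpleGraph.mem_neighborFinset, Finset.mem_singleton] at hy
    simp only [hT, Finset.mem_filter, Finset.mem_univ, true_and]
    rcases hy with h | ⟨u, hu, huy, hyv⟩
    · exact hfN1 y h
    · exact hfN2 u y hu huy hyv
  have hDcard : D.card = r ^ 2 := by
    have hdisj2 : ∀ u1 ∈ G.neighborFinset v, ∀ u2 ∈ G.neighborFinset v, u1 ≠ u2 →
        Disjoint (G.neighborFinset u1 \ {v}) (G.neighborFinset u2 \ {v}) := by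
      intro u1 h1 u2 h2 hne
      rw [Finset.disjoint_left]
      intro y hy1 hy2
      simp only [Finset.mem_sdiff, SimpleGraph.mem_neighborFinset, Finset.mem_singleton] at h1 h2 hy1 hy2
      exact no_c4 h6 h1 hy1.1 hy2.1.symm h2.symm (Ne.symm hy1.2) hne
    have hbcard : ((G.neighborFinset v).biUnion (fun u => G.neighborFinset u \ {v})).card
        = r * (r - 1) := by
      rw [Finset.card_biUnion hdisj2]
      have : ∀ u ∈ G.neighborFinset v, (G.neighborFinset u \ {v}).card = r - 1 := by
        intro u hu
        rw [SimpleGraph.mem_neighborFinset] at hu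
        rw [Finset.card_sdiff_of_subset (by simp [SimpleGraph.mem_neighborFinset, hu.symm]),
          SimpleGraph.card_neighborFinset_eq_degree, hreg u, Finset.card_singleton]
      rw [Finset.sum_congr rfl this, Finset.sum_const,
        SimpleGraph.card_neighborFinset_eq_degree, hreg v, smul_eq_mul]
    have hdisj1 : Disjoint (G.neighborFinset v)
        ((G.neighborFinset v).biUnion (fun u => G.neighborFinset u \ {v})) := by
      rw [Finset.disjoint_left]
      intro y hy1 hy2
      simp only [Finset.mem_biUnion, Finset.mem_sdiff, SimpleGraph.mem_neighborFinset,
        Finset.mem_singleton] at hy1 hy2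
      obtain ⟨u, hu, huy, -⟩ := hy2
      exact no_tri h6 hu huy hy1.symm
    rw [hD, Finset.card_union_of_disjoint hdisj1, hbcard,
      SimpleGraph.card_neighborFinset_eq_degree, hreg v]
    have : 1 ≤ r := by omega
    nlinarith [Nat.sub_add_cancel this]
  have hTcard : r ^ 2 ≤ T.card := hDcard ▸ Finset.card_le_card hDT
  -- sum bound
  have hsum : ∑ x, f x + 2 * T.card ≤ 2 * Fintype.card V + 1 := by
    have hvT : v ∉ T := by simp [hT, hfv]
    calc ∑ x, f x + 2 * T.card
        = ∑ x, f x + ∑ x ∈ T, 2 := by rw [Finset.sum_const, smul_eq_mul]; ring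
      _ = ∑ x, (f x + if x ∈ T then 2 else 0) := by
          rw [Finset.sum_add_distrib]
          congr 1
          rw [← Finset.sum_filter]
          congr 1
          ext x
          simp [hT]
      _ ≤ ∑ x : V, (2 + if x = v then 1 else 0) := by
          apply Finset.sum_le_sum
          intro x _
          by_cases hx : x = v
          · subst hx
            simp [hfv, hvT]
          · rcases hval x with h | h | h
            · have : x ∈ T := by simp [hT, h]
              simp [h, this, hx]
            · have : x ∉ T := by simp [hT, h]
              simp [h, this, hx]
            · exfalso
              simp only [hfdef, if_neg hx] at h
              split_ifs at h; omega
      _ = 2 * Fintype.card V + 1 := by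
          rw [Finset.sum_add_distrib, Finset.sum_const, Finset.sum_ite_eq' Finset.univ v]
          simp [mul_comm]
  -- conclude over ℤ
  have hTn : T.card ≤ Fintype.card V := Finset.card_le_univ T
  have : (∑ x, f x : ℤ) + 2 * T.card ≤ 2 * Fintype.card V + 1 := by exact_mod_cast hsum
  have h1 : (rdrNum G : ℤ) ≤ (∑ x, f x : ℤ) := by exact_mod_cast hmem
  have h2 : (r : ℤ) ^ 2 ≤ T.card := by exact_mod_cast hTcard
  linarith
end

section
/- The Heawood graph H satisfies γ_rdR(H) = 11. -/
open Finset

section Helpers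

open SimpleGraph

variable {V : Type*} {G : SimpleGraph V}

lemma noC3 (hgirth : 6 ≤ G.egirth) {a b c : V} (hab : G.Adj a b) (hbc : G.Adj b c)
    (hca : G.Adj c a) : False := by
  have hc : (Walk.cons hab (Walk.cons hbc (Walk.cons hca Walk.nil))).IsCycle := by
    simp_all [Walk.isCycle_def, Walk.isTrail_def, Sym2.eq_iff, hab.ne, hbc.ne, hca.ne,
      hab.ne', hbc.ne', hca.ne']
  have := le_egirth.mp hgirth a _ hc
  norm_num at this

lemma noC4 (hgirth : 6 ≤ G.egirth) {a b c d : V} (hab : G.Adj a b) (hbc : G.Adj b c)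
    (hcd : G.Adj c d) (hda : G.Adj d a) (hac : a ≠ c) (hbd : b ≠ d) : False := by
  have hc : (Walk.cons hab (Walk.cons hbc (Walk.cons hcd (Walk.cons hda Walk.nil)))).IsCycle := by
    simp_all [Walk.isCycle_def, Walk.isTrail_def, Sym2.eq_iff, hab.ne, hbc.ne, hcd.ne, hda.ne,
      hab.ne', hbc.ne', hcd.ne', hda.ne', hac, hbd, hac.symm, hbd.symm]
  have := le_egirth.mp hgirth a _ hc
  norm_num at this

lemma noC5 (hgirth : 6 ≤ G.egirth) {a b c d e : V} (hab : G.Adj a b) (hbc : G.Adj b c)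
    (hcd : G.Adj c d) (hde : G.Adj d e) (hea : G.Adj e a)
    (hac : a ≠ c) (had : a ≠ d) (hbd : b ≠ d) (hbe : b ≠ e) (hce : c ≠ e) : False := by
  have hc : (Walk.cons hab (Walk.cons hbc (Walk.cons hcd (Walk.cons hde
      (Walk.cons hea Walk.nil))))).IsCycle := by
    simp_all [Walk.isCycle_def, Walk.isTrail_def, Sym2.eq_iff, hab.ne, hbc.ne, hcd.ne, hde.ne,
      hea.ne, hab.ne', hbc.ne', hcd.ne', hde.ne', hea.ne', hac, hbd, hac.symm, hbd.symm,
      had, had.symm, hbe, hbe.symm, hce, hce.symm]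
  have := le_egirth.mp hgirth a _ hc
  norm_num at this

lemma sixCycle (hg : G.girth = 6) :
    ∃ v1 v2 v3 v4 v5 v6 : V, G.Adj v1 v2 ∧ G.Adj v2 v3 ∧ G.Adj v3 v4 ∧ G.Adj v4 v5 ∧
      G.Adj v5 v6 ∧ G.Adj v6 v1 ∧ [v1, v2, v3, v4, v5, v6].Nodup := by
  have hna : ¬ G.IsAcyclic := by
    intro h; rw [← SimpleGraph.girth_eq_zero] at h; omega
  obtain ⟨a, w, hw, hl⟩ := SimpleGraph.exists_girth_eq_length.mpr hna
  rw [hg] at hl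
  cases w with
  | nil => simp at hl
  | cons h1 p1 =>
  cases p1 with
  | nil => simp at hl
  | cons h2 p2 =>
  cases p2 with
  | nil => simp at hl
  | cons h3 p3 =>
  cases p3 with
  | nil => simp at hl
  | cons h4 p4 =>
  cases p4 with
  | nil => simp at hl
  | cons h5 p5 =>
  cases p5 with
  | nil => simp at hl
  | cons h6 p6 =>
  cases p6 with
  | cons h7 p7 => simp [SimpleGraph.Walk.length_cons] at hl
  | nil =>
    refine ⟨_, _, _, _, _, _, h1, h2, h3, h4, h5, h6, ?_⟩
    have := hw.support_nodup
    simp_all [SimpleGraph.Walk.support_cons, List.nodup_cons]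
    tauto

lemma third [DecidableEq V] {s : Finset V} {a b : V} (hs : s.card = 3)
    (ha : a ∈ s) (hb : b ∈ s) (hab : a ≠ b) :
    ∃ c, c ≠ a ∧ c ≠ b ∧ s = {a, b, c} := by
  have hsub : {a, b} ⊆ s := by
    intro z hz; simp at hz; rcases hz with rfl | rfl <;> assumption
  have h1 : (s \ {a, b}).card = 1 := by
    rw [Finset.card_sdiff_of_subset hsub, hs, Finset.card_insert_of_notMem (by simpa using hab),
      Finset.card_singleton]
  obtain ⟨c, hc⟩ := Finset.card_eq_one.mp h1
  have hcs : c ∈ s \ {a, b} := hc ▸ Finset.mem_singleton_self c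
  rw [Finset.mem_sdiff] at hcs
  simp at hcs
  refine ⟨c, hcs.2.1, hcs.2.2, ?_⟩
  refine (Finset.eq_of_subset_of_card_le ?_ ?_).symm
  · intro z hz; simp at hz
    rcases hz with rfl | rfl | rfl <;> [exact ha; exact hb; exact hcs.1]
  · rw [hs, Finset.card_insert_of_notMem (by simp [hab, Ne.symm hcs.2.1]),
      Finset.card_insert_of_notMem (by simp [Ne.symm hcs.2.2]), Finset.card_singleton]

lemma twoOfThree [DecidableEq V] {s : Finset V} {a p q r : V}
    (hs : s.card = 3) (ha : a ∈ s) (hsub : s ⊆ {a, p, q, r}) :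
    (p ∈ s ∧ q ∈ s) ∨ (p ∈ s ∧ r ∈ s) ∨ (q ∈ s ∧ r ∈ s) := by
  have key : ∀ w : V, (∀ z ∈ s, z = a ∨ z = w) → False := by
    intro w hw
    have hsw : s ⊆ {a, w} := by
      intro z hz; rcases hw z hz with rfl | rfl <;> simp
    have h1 := Finset.card_le_card hsw
    have h2 : ({a, w} : Finset V).card ≤ 2 :=
      (Finset.card_insert_le _ _).trans (by simp)
    omega
  by_cases hp : p ∈ s <;> by_cases hq : q ∈ s <;> by_cases hr : r ∈ s
  · tauto
  · tauto
  · tauto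
  · exact absurd (key p (fun z hz => by
      have := hsub hz; simp at this
      rcases this with rfl | rfl | rfl | rfl <;> tauto)) (by tauto)
  · tauto
  · exact absurd (key q (fun z hz => by
      have := hsub hz; simp at this
      rcases this with rfl | rfl | rfl | rfl <;> tauto)) (by tauto)
  · exact absurd (key r (fun z hz => by
      have := hsub hz; simp at this
      rcases this with rfl | rfl | rfl | rfl <;> tauto)) (by tauto)
  · exact absurd (key a (fun z hz => by
      have := hsub hz; simp at this
      rcases this with rfl | rfl | rfl | rfl <;> tauto)) (by tauto)

lemma tool4 [Fintype V] [DecidableEq V] [DecidableRel G.Adj] {c p q r w : V}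
    (h1 : G.Adj c p) (h2 : G.Adj c q) (h3 : G.Adj c r) (h4 : G.Adj c w)
    (hc : (G.neighborFinset c).card = 3) (n1 : p ≠ q) (n2 : p ≠ r) (n3 : p ≠ w)
    (n4 : q ≠ r) (n5 : q ≠ w) (n6 : r ≠ w) : False := by
  have hsub : ({p, q, r, w} : Finset V) ⊆ G.neighborFinset c := by
    intro z hz; simp at hz
    rcases hz with rfl | rfl | rfl | rfl <;> simpa [SimpleGraph.mem_neighborFinset]
  have hle := Finset.card_le_card hsub
  rw [hc, Finset.card_insert_of_notMem (by simp [n1, n2, n3]),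
    Finset.card_insert_of_notMem (by simp [n4, n5]),
    Finset.card_insert_of_notMem (by simp [n6]), Finset.card_singleton] at hle
  omega

lemma pairLemma [Fintype V] [DecidableEq V] [DecidableRel G.Adj]
    (hgirth : 6 ≤ G.egirth) {a b va vb x y : V}
    (hca : (G.neighborFinset a).card = 3) (hcb : (G.neighborFinset b).card = 3)
    (hva : G.Adj a va) (hvb : G.Adj b vb)
    (hab : a ≠ b) (hxy : x ≠ y) (hax : a ≠ x) (hay : a ≠ y) (hbx : b ≠ x) (hby : b ≠ y)
    (hvax : va ≠ x) (hvay : va ≠ y) (hvab : va ≠ b)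
    (hvbx : vb ≠ x) (hvby : vb ≠ y) (hvba : vb ≠ a)
    (hA : (G.Adj a b ∧ G.Adj a x) ∨ (G.Adj a b ∧ G.Adj a y) ∨ (G.Adj a x ∧ G.Adj a y))
    (hB : (G.Adj b a ∧ G.Adj b x) ∨ (G.Adj b a ∧ G.Adj b y) ∨ (G.Adj b x ∧ G.Adj b y)) :
    G.Adj a b ∧ ((G.Adj a x ∧ G.Adj b y) ∨ (G.Adj a y ∧ G.Adj b x)) := by
  rcases hA with ⟨h1, h2⟩ | ⟨h1, h2⟩ | ⟨h1, h2⟩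
  · rcases hB with ⟨g1, g2⟩ | ⟨g1, g2⟩ | ⟨g1, g2⟩
    · exact absurd (noC3 hgirth h1 g2 h2.symm) (by tauto)
    · exact ⟨h1, Or.inl ⟨h2, g2⟩⟩
    · exact absurd (tool4 hvb g1 g2 h1.symm hcb hvbx hvby hvba hxy (Ne.symm hax)
        (Ne.symm hay)) (by tauto)
  · rcases hB with ⟨g1, g2⟩ | ⟨g1, g2⟩ | ⟨g1, g2⟩
    · exact ⟨h1, Or.inr ⟨h2, g2⟩⟩
    · exact absurd (noC3 hgirth h1 g2 h2.symm) (by tauto)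
    · exact absurd (tool4 hvb g1 g2 h1.symm hcb hvbx hvby hvba hxy (Ne.symm hax)
        (Ne.symm hay)) (by tauto)
  · rcases hB with ⟨g1, g2⟩ | ⟨g1, g2⟩ | ⟨g1, g2⟩
    · exact absurd (tool4 hva h1 h2 g1.symm hca hvax hvay hvab hxy (Ne.symm hbx)
        (Ne.symm hby)) (by tauto)
    · exact absurd (tool4 hva h1 h2 g1.symm hca hvax hvay hvab hxy (Ne.symm hbx)
        (Ne.symm hby)) (by tauto)
    · exact absurd (noC4 hgirth h1 g1.symm g2 h2.symm hab hxy) (by tauto)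

lemma lowerBound [Fintype V] [DecidableRel G.Adj]
    (hcard : Fintype.card V = 14) (hreg : G.IsRegularOfDegree 3)
    (f : V → ℕ) (hf : IsRDRD G f) : 11 ≤ ∑ v, f v := by
  classical
  obtain ⟨hle, h0, _, _⟩ := hf
  set t : ℕ → ℕ := fun n => if n = 3 then 2 else if n = 2 then 1 else 0 with ht
  have key : ∀ v, f v = 0 → 2 ≤ ∑ u ∈ G.neighborFinset v, t (f u) := by
    intro v hv
    rcases h0 v hv with ⟨u, hadj, hu3⟩ | ⟨u, w, hau, haw, huw, hu2, hw2⟩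
    · calc 2 = t (f u) := by simp [ht, hu3]
        _ ≤ _ := Finset.single_le_sum (f := fun z => t (f z)) (fun i _ => Nat.zero_le _)
          ((G.mem_neighborFinset v u).mpr hadj)
    · have hsub : ({u, w} : Finset V) ⊆ G.neighborFinset v := by
        intro z hz
        simp only [Finset.mem_insert, Finset.mem_singleton] at hz
        rcases hz with rfl | rfl <;> simpa [SimpleGraph.mem_neighborFinset]
      calc 2 = ∑ z ∈ ({u, w} : Finset V), t (f z) := by
            rw [Finset.sum_insert (by simpa using huw)]
            simp [ht, hu2, hw2]
        _ ≤ _ := Finset.sum_le_sum_of_subset hsub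
  have swap : (∑ v, ∑ u ∈ G.neighborFinset v, t (f u)) = ∑ u, 3 * t (f u) := by
    have e1 : ∀ v : V, (∑ u ∈ G.neighborFinset v, t (f u))
        = ∑ u, if G.Adj v u then t (f u) else 0 := by
      intro v
      rw [SimpleGraph.neighborFinset_eq_filter, Finset.sum_filter]
    simp_rw [e1]
    rw [Finset.sum_comm]
    congr 1; funext u
    have e2 : (∑ v, if G.Adj v u then t (f u) else 0)
        = ∑ v ∈ Finset.univ.filter (fun v => G.Adj v u), t (f u) := by rw [Finset.sum_filter]
    rw [e2]
    have hfil : Finset.univ.filter (fun v => G.Adj v u) = G.neighborFinset u := by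
      ext z; simp [SimpleGraph.mem_neighborFinset, SimpleGraph.adj_comm]
    rw [hfil, Finset.sum_const, SimpleGraph.card_neighborFinset_eq_degree, hreg u]
    ring
  have step1 : (∑ v, if f v = 0 then (2:ℕ) else 0) ≤ ∑ u, 3 * t (f u) := by
    rw [← swap]
    exact Finset.sum_le_sum (fun v _ => by
      by_cases hv : f v = 0
      · simpa [hv] using key v hv
      · simp [hv])
  have main : (∑ v, (9 * t (f v) + if f v = 0 then 0 else 6)) ≤ ∑ v, 8 * f v := by
    refine Finset.sum_le_sum (fun v _ => ?_)
    have h3 := hle v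
    rcases Nat.lt_or_ge (f v) 1 with h | h
    · interval_cases h : (f v) <;> simp [ht]
    · rcases Nat.lt_or_ge (f v) 2 with h' | h'
      · interval_cases h : (f v) <;> simp [ht]
      · interval_cases h : (f v) <;> simp [ht]
  have hsplit : (84:ℕ) = 3 * (∑ v, if f v = 0 then (2:ℕ) else 0)
      + ∑ v, (if f v = 0 then (0:ℕ) else 6) := by
    have e84 : (84:ℕ) = ∑ _v : V, 6 := by
      rw [Finset.sum_const, Finset.card_univ, hcard]; norm_num
    rw [e84, Finset.mul_sum, ← Finset.sum_add_distrib]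
    congr 1; funext v
    by_cases hv : f v = 0 <;> simp [hv]
  have h84 : (84:ℕ) ≤ ∑ v, 8 * f v := by
    calc (84:ℕ) = _ := hsplit
      _ ≤ 3 * (∑ u, 3 * t (f u)) + ∑ v, (if f v = 0 then (0:ℕ) else 6) := by
          gcongr
      _ = ∑ v, (9 * t (f v) + if f v = 0 then 0 else 6) := by
          rw [Finset.sum_add_distrib, Finset.mul_sum]
          congr 1
          exact Finset.sum_congr rfl (fun v _ => by ring)
      _ ≤ _ := main
  rw [← Finset.mul_sum] at h84
  omega

lemma finalStep [Fintype V] [DecidableEq V] [DecidableRel G.Adj]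
    (hgirth : 6 ≤ G.egirth)
    {v1 v2 v3 v4 v5 v6 u1 u2 u3 u4 u5 u6 x y : V}
    (a12 : G.Adj v1 v2) (a23 : G.Adj v2 v3) (a34 : G.Adj v3 v4) (a45 : G.Adj v4 v5)
    (a56 : G.Adj v5 v6) (a61 : G.Adj v6 v1)
    (bb1 : G.Adj v1 u1) (bb2 : G.Adj v2 u2) (bb3 : G.Adj v3 u3) (bb4 : G.Adj v4 u4)
    (bb5 : G.Adj v5 u5) (bb6 : G.Adj v6 u6)
    (p14 : G.Adj u1 u4) (p25 : G.Adj u2 u5) (p36 : G.Adj u3 u6)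
    (hx1 : G.Adj u1 x) (hy4 : G.Adj u4 y)
    (q25 : (G.Adj u2 x ∧ G.Adj u5 y) ∨ (G.Adj u2 y ∧ G.Adj u5 x))
    (q36 : (G.Adj u3 x ∧ G.Adj u6 y) ∨ (G.Adj u3 y ∧ G.Adj u6 x))
    (huniv : (Finset.univ : Finset V) = ([v1, v2, v3, v4, v5, v6, u1, u2, u3, u4, u5, u6, x, y] : List V).toFinset)
    (hnodup : ([v1, v2, v3, v4, v5, v6, u1, u2, u3, u4, u5, u6, x, y] : List V).Nodup) :
    ∃ f : V → ℕ, IsRDRD G f ∧ ∑ v, f v = 11 := by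
  have hnd := hnodup
  simp only [List.nodup_cons, List.mem_cons, List.mem_singleton, List.not_mem_nil, or_false, not_or, not_false_eq_true,
    List.nodup_nil, and_true] at hnd
  obtain ⟨⟨n1_2, n1_3, n1_4, n1_5, n1_6, n1_7, n1_8, n1_9, n1_10, n1_11, n1_12, n1_13, n1_14⟩, ⟨n2_3, n2_4, n2_5, n2_6, n2_7, n2_8, n2_9, n2_10, n2_11, n2_12, n2_13, n2_14⟩, ⟨n3_4, n3_5, n3_6, n3_7, n3_8, n3_9, n3_10, n3_11, n3_12, n3_13, n3_14⟩, ⟨n4_5, n4_6, n4_7, n4_8, n4_9, n4_10, n4_11, n4_12, n4_13, n4_14⟩, ⟨n5_6, n5_7, n5_8, n5_9, n5_10, n5_11, n5_12, n5_13, n5_14⟩, ⟨n6_7, n6_8, n6_9, n6_10, n6_11, n6_12, n6_13, n6_14⟩, ⟨n7_8, n7_9, n7_10, n7_11, n7_12, n7_13, n7_14⟩, ⟨n8_9, n8_10, n8_11, n8_12, n8_13, n8_14⟩, ⟨n9_10, n9_11, n9_12, n9_13, n9_14⟩, ⟨n10_11, n10_12, n10_13, n10_14⟩, ⟨n11_12,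 n11_13, n11_14⟩, ⟨n12_13, n12_14⟩, n13_14⟩ := hnd
  have hder : G.Adj u2 y ∧ G.Adj u5 x := by
    rcases q25 with ⟨h2x, _⟩ | h
    · exact absurd (noC5 hgirth hx1.symm bb1.symm a12 bb2 h2x
        (Ne.symm n1_13) (Ne.symm n2_13) (Ne.symm n2_7) n7_8 n1_8) (fun hh => hh)
    · exact h
  have hder2 : G.Adj u3 x ∧ G.Adj u6 y := by
    rcases q36 with h | ⟨_, h6x⟩
    · exact h
    · exact absurd (noC5 hgirth hx1.symm bb1.symm a61.symm bb6 h6x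
        (Ne.symm n1_13) (Ne.symm n6_13) (Ne.symm n6_7) n7_12 n1_12) (fun hh => hh)
  obtain ⟨hu2y, hu5x⟩ := hder
  obtain ⟨hu3x, hu6y⟩ := hder2
  set f : V → ℕ := fun w => if w = x then 3 else if w = v2 then 2 else if w = v4 then 2
    else if w = v6 then 2 else if w = y then 2 else 0 with hfdef
  have hfx : f x = 3 := by simp [hfdef]
  have hfz : ∀ z, z ≠ x → z ≠ v2 → z ≠ v4 → z ≠ v6 → z ≠ y → f z = 0 := by
    intro z h1 h2 h3 h4 h5; simp [hfdef, h1, h2, h3, h4, h5]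
  have hfv1 : f v1 = 0 := hfz v1 n1_13 n1_2 n1_4 n1_6 n1_14
  have hfv3 : f v3 = 0 := hfz v3 n3_13 (Ne.symm n2_3) n3_4 n3_6 n3_14
  have hfv5 : f v5 = 0 := hfz v5 n5_13 (Ne.symm n2_5) (Ne.symm n4_5) n5_6 n5_14
  have hfu1 : f u1 = 0 := hfz u1 n7_13 (Ne.symm n2_7) (Ne.symm n4_7) (Ne.symm n6_7) n7_14
  have hfu2 : f u2 = 0 := hfz u2 n8_13 (Ne.symm n2_8) (Ne.symm n4_8) (Ne.symm n6_8) n8_14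
  have hfu3 : f u3 = 0 := hfz u3 n9_13 (Ne.symm n2_9) (Ne.symm n4_9) (Ne.symm n6_9) n9_14
  have hfu4 : f u4 = 0 := hfz u4 n10_13 (Ne.symm n2_10) (Ne.symm n4_10) (Ne.symm n6_10) n10_14
  have hfu5 : f u5 = 0 := hfz u5 n11_13 (Ne.symm n2_11) (Ne.symm n4_11) (Ne.symm n6_11) n11_14
  have hfu6 : f u6 = 0 := hfz u6 n12_13 (Ne.symm n2_12) (Ne.symm n4_12) (Ne.symm n6_12) n12_14
  have hfv2 : f v2 = 2 := by simp [hfdef, n2_13]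
  have hfv4 : f v4 = 2 := by simp [hfdef, n4_13, (Ne.symm n2_4)]
  have hfv6 : f v6 = 2 := by simp [hfdef, n6_13, (Ne.symm n2_6), (Ne.symm n4_6)]
  have hfy : f y = 2 := by simp [hfdef, (Ne.symm n13_14), (Ne.symm n2_14), (Ne.symm n4_14), (Ne.symm n6_14)]
  have hall : ∀ w : V, w = v1 ∨ w = v2 ∨ w = v3 ∨ w = v4 ∨ w = v5 ∨ w = v6 ∨ w = u1 ∨
      w = u2 ∨ w = u3 ∨ w = u4 ∨ w = u5 ∨ w = u6 ∨ w = x ∨ w = y := by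
    intro w
    have h := Finset.mem_univ w
    rw [huniv] at h
    simpa using h
  refine ⟨f, ⟨?_, ?_, ?_, ?_⟩, ?_⟩
  · intro w; simp only [hfdef]; split_ifs <;> omega
  · intro w hw
    rcases hall w with rfl | rfl | rfl | rfl | rfl | rfl | rfl | rfl | rfl | rfl | rfl | rfl | rfl | rfl
    · exact Or.inr ⟨v2, v6, a12, a61.symm, n2_6, hfv2, hfv6⟩
    · simp [hfv2] at hw
    · exact Or.inr ⟨v2, v4, a23.symm, a34, n2_4, hfv2, hfv4⟩
    · simp [hfv4] at hw
    · exact Or.inr ⟨v4, v6, a45.symm, a56, n4_6, hfv4, hfv6⟩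
    · simp [hfv6] at hw
    · exact Or.inl ⟨x, hx1, hfx⟩
    · exact Or.inr ⟨v2, y, bb2.symm, hu2y, n2_14, hfv2, hfy⟩
    · exact Or.inl ⟨x, hu3x, hfx⟩
    · exact Or.inr ⟨v4, y, bb4.symm, hy4, n4_14, hfv4, hfy⟩
    · exact Or.inl ⟨x, hu5x, hfx⟩
    · exact Or.inr ⟨v6, y, bb6.symm, hu6y, n6_14, hfv6, hfy⟩
    · simp [hfx] at hw
    · simp [hfy] at hw
  · intro w hw; simp only [hfdef] at hw; split_ifs at hw <;> omega
  · intro w hw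
    rcases hall w with rfl | rfl | rfl | rfl | rfl | rfl | rfl | rfl | rfl | rfl | rfl | rfl | rfl | rfl
    · exact ⟨u1, bb1, hfu1⟩
    · simp [hfv2] at hw
    · exact ⟨u3, bb3, hfu3⟩
    · simp [hfv4] at hw
    · exact ⟨u5, bb5, hfu5⟩
    · simp [hfv6] at hw
    · exact ⟨v1, bb1.symm, hfv1⟩
    · exact ⟨u5, p25, hfu5⟩
    · exact ⟨v3, bb3.symm, hfv3⟩
    · exact ⟨u1, p14.symm, hfu1⟩
    · exact ⟨v5, bb5.symm, hfv5⟩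
    · exact ⟨u3, p36.symm, hfu3⟩
    · simp [hfx] at hw
    · simp [hfy] at hw
  · rw [huniv, List.sum_toFinset _ hnodup]
    simp [hfv1, hfv2, hfv3, hfv4, hfv5, hfv6, hfu1, hfu2, hfu3, hfu4, hfu5, hfu6, hfx, hfy]

lemma upperBound [Fintype V] [DecidableRel G.Adj]
    (hcard : Fintype.card V = 14) (hreg : G.IsRegularOfDegree 3) (hg : G.girth = 6) :
    ∃ f : V → ℕ, IsRDRD G f ∧ ∑ v, f v = 11 := by
  classical
  have hgirth : 6 ≤ G.egirth := by
    rcases eq_or_ne G.egirth ⊤ with h | h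
    · rw [SimpleGraph.girth, h] at hg; simp at hg
    · have h6 := ENat.coe_toNat h
      rw [SimpleGraph.girth] at hg
      rw [hg] at h6
      exact le_of_eq h6
  have hdeg : ∀ v : V, (G.neighborFinset v).card = 3 := fun v => by
    rw [SimpleGraph.card_neighborFinset_eq_degree]; exact hreg v
  obtain ⟨v1, v2, v3, v4, v5, v6, a12, a23, a34, a45, a56, a61, hnd6⟩ := sixCycle hg
  simp only [List.nodup_cons, List.mem_cons, List.mem_singleton, List.not_mem_nil, or_false, not_or, not_false_eq_true,
    List.nodup_nil, and_true] at hnd6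
  obtain ⟨⟨m1_2, m1_3, m1_4, m1_5, m1_6⟩, ⟨m2_3, m2_4, m2_5, m2_6⟩, ⟨m3_4, m3_5, m3_6⟩, ⟨m4_5, m4_6⟩, m5_6⟩ := hnd6
  obtain ⟨u1, hu1a, hu1b, hN1⟩ := third (hdeg v1) ((G.mem_neighborFinset _ _).mpr a61.symm) ((G.mem_neighborFinset _ _).mpr a12) (Ne.symm m2_6)
  have bb1 : G.Adj v1 u1 := (G.mem_neighborFinset _ _).mp (by rw [hN1]; simp)
  obtain ⟨u2, hu2a, hu2b, hN2⟩ := third (hdeg v2) ((G.mem_neighborFinset _ _).mpr a12.symm) ((G.mem_neighborFinset _ _).mpr a23) m1_3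
  have bb2 : G.Adj v2 u2 := (G.mem_neighborFinset _ _).mp (by rw [hN2]; simp)
  obtain ⟨u3, hu3a, hu3b, hN3⟩ := third (hdeg v3) ((G.mem_neighborFinset _ _).mpr a23.symm) ((G.mem_neighborFinset _ _).mpr a34) m2_4
  have bb3 : G.Adj v3 u3 := (G.mem_neighborFinset _ _).mp (by rw [hN3]; simp)
  obtain ⟨u4, hu4a, hu4b, hN4⟩ := third (hdeg v4) ((G.mem_neighborFinset _ _).mpr a34.symm) ((G.mem_neighborFinset _ _).mpr a45) m3_5
  have bb4 : G.Adj v4 u4 := (G.mem_neighborFinset _ _).mp (by rw [hN4]; simp)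
  obtain ⟨u5, hu5a, hu5b, hN5⟩ := third (hdeg v5) ((G.mem_neighborFinset _ _).mpr a45.symm) ((G.mem_neighborFinset _ _).mpr a56) m4_6
  have bb5 : G.Adj v5 u5 := (G.mem_neighborFinset _ _).mp (by rw [hN5]; simp)
  obtain ⟨u6, hu6a, hu6b, hN6⟩ := third (hdeg v6) ((G.mem_neighborFinset _ _).mpr a56.symm) ((G.mem_neighborFinset _ _).mpr a61) (Ne.symm m1_5)
  have bb6 : G.Adj v6 u6 := (G.mem_neighborFinset _ _).mp (by rw [hN6]; simp)
  have nu1v3 : u1 ≠ v3 := by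
    intro heq; rw [heq] at bb1
    exact noC3 hgirth a12 a23 bb1.symm
  have nu1v4 : u1 ≠ v4 := by
    intro heq; rw [heq] at bb1
    exact noC4 hgirth a12 a23 a34 bb1.symm m1_3 m2_4
  have nu1v5 : u1 ≠ v5 := by
    intro heq; rw [heq] at bb1
    exact noC3 hgirth bb1 a56 a61
  have nu2v4 : u2 ≠ v4 := by
    intro heq; rw [heq] at bb2
    exact noC3 hgirth a23 a34 bb2.symm
  have nu2v5 : u2 ≠ v5 := by
    intro heq; rw [heq] at bb2
    exact noC4 hgirth a23 a34 a45 bb2.symm m2_4 m3_5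
  have nu2v6 : u2 ≠ v6 := by
    intro heq; rw [heq] at bb2
    exact noC3 hgirth bb2 a61 a12
  have nu3v5 : u3 ≠ v5 := by
    intro heq; rw [heq] at bb3
    exact noC3 hgirth a34 a45 bb3.symm
  have nu3v6 : u3 ≠ v6 := by
    intro heq; rw [heq] at bb3
    exact noC4 hgirth a34 a45 a56 bb3.symm m3_5 m4_6
  have nu3v1 : u3 ≠ v1 := by
    intro heq; rw [heq] at bb3
    exact noC3 hgirth bb3 a12 a23
  have nu4v6 : u4 ≠ v6 := by
    intro heq; rw [heq] at bb4
    exact noC3 hgirth a45 a56 bb4.symm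
  have nu4v1 : u4 ≠ v1 := by
    intro heq; rw [heq] at bb4
    exact noC4 hgirth a45 a56 a61 bb4.symm m4_6 (Ne.symm m1_5)
  have nu4v2 : u4 ≠ v2 := by
    intro heq; rw [heq] at bb4
    exact noC3 hgirth bb4 a23 a34
  have nu5v1 : u5 ≠ v1 := by
    intro heq; rw [heq] at bb5
    exact noC3 hgirth a56 a61 bb5.symm
  have nu5v2 : u5 ≠ v2 := by
    intro heq; rw [heq] at bb5
    exact noC4 hgirth a56 a61 a12 bb5.symm (Ne.symm m1_5) (Ne.symm m2_6)
  have nu5v3 : u5 ≠ v3 := by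
    intro heq; rw [heq] at bb5
    exact noC3 hgirth bb5 a34 a45
  have nu6v2 : u6 ≠ v2 := by
    intro heq; rw [heq] at bb6
    exact noC3 hgirth a61 a12 bb6.symm
  have nu6v3 : u6 ≠ v3 := by
    intro heq; rw [heq] at bb6
    exact noC4 hgirth a61 a12 a23 bb6.symm (Ne.symm m2_6) m1_3
  have nu6v4 : u6 ≠ v4 := by
    intro heq; rw [heq] at bb6
    exact noC3 hgirth bb6 a45 a56
  have nu1u2 : u1 ≠ u2 := by
    intro heq; rw [← heq] at bb2
    exact noC3 hgirth bb1 bb2.symm a12.symm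
  have nu1u3 : u1 ≠ u3 := by
    intro heq; rw [← heq] at bb3
    exact noC4 hgirth a12 a23 bb3 bb1.symm m1_3 (Ne.symm hu1b)
  have nu1u4 : u1 ≠ u4 := by
    intro heq; rw [← heq] at bb4
    exact noC5 hgirth a12 a23 a34 bb4 bb1.symm m1_3 m1_4 m2_4 (Ne.symm hu1b) (Ne.symm nu1v3)
  have nu1u5 : u1 ≠ u5 := by
    intro heq; rw [← heq] at bb5
    exact noC4 hgirth a56 a61 bb1 bb5.symm (Ne.symm m1_5) (Ne.symm hu1a)
  have nu1u6 : u1 ≠ u6 := by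
    intro heq; rw [← heq] at bb6
    exact noC3 hgirth bb1 bb6.symm a61
  have nu2u3 : u2 ≠ u3 := by
    intro heq; rw [← heq] at bb3
    exact noC3 hgirth bb2 bb3.symm a23.symm
  have nu2u4 : u2 ≠ u4 := by
    intro heq; rw [← heq] at bb4
    exact noC4 hgirth a23 a34 bb4 bb2.symm m2_4 (Ne.symm hu2b)
  have nu2u5 : u2 ≠ u5 := by
    intro heq; rw [← heq] at bb5
    exact noC5 hgirth a23 a34 a45 bb5 bb2.symm m2_4 m2_5 m3_5 (Ne.symm hu2b) (Ne.symm nu2v4)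
  have nu2u6 : u2 ≠ u6 := by
    intro heq; rw [← heq] at bb6
    exact noC4 hgirth a61 a12 bb2 bb6.symm (Ne.symm m2_6) (Ne.symm hu2a)
  have nu3u4 : u3 ≠ u4 := by
    intro heq; rw [← heq] at bb4
    exact noC3 hgirth bb3 bb4.symm a34.symm
  have nu3u5 : u3 ≠ u5 := by
    intro heq; rw [← heq] at bb5
    exact noC4 hgirth a34 a45 bb5 bb3.symm m3_5 (Ne.symm hu3b)
  have nu3u6 : u3 ≠ u6 := by
    intro heq; rw [← heq] at bb6
    exact noC5 hgirth a34 a45 a56 bb6 bb3.symm m3_5 m3_6 m4_6 (Ne.symm hu3b) (Ne.symm nu3v5)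
  have nu4u5 : u4 ≠ u5 := by
    intro heq; rw [← heq] at bb5
    exact noC3 hgirth bb4 bb5.symm a45.symm
  have nu4u6 : u4 ≠ u6 := by
    intro heq; rw [← heq] at bb6
    exact noC4 hgirth a45 a56 bb6 bb4.symm m4_6 (Ne.symm hu4b)
  have nu5u6 : u5 ≠ u6 := by
    intro heq; rw [← heq] at bb6
    exact noC3 hgirth bb5 bb6.symm a56.symm
  have hnodup12 : ([v1, v2, v3, v4, v5, v6, u1, u2, u3, u4, u5, u6] : List V).Nodup := by
    simp only [List.nodup_cons, List.mem_cons, List.mem_singleton, List.not_mem_nil, or_false, not_or, not_false_eq_true,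
      List.nodup_nil, and_true]
    exact ⟨⟨m1_2, m1_3, m1_4, m1_5, m1_6, (Ne.symm bb1.ne'), (Ne.symm hu2a), (Ne.symm nu3v1), (Ne.symm nu4v1), (Ne.symm nu5v1), (Ne.symm hu6b)⟩, ⟨m2_3, m2_4, m2_5, m2_6, (Ne.symm hu1b), (Ne.symm bb2.ne'), (Ne.symm hu3a), (Ne.symm nu4v2), (Ne.symm nu5v2), (Ne.symm nu6v2)⟩, ⟨m3_4, m3_5, m3_6, (Ne.symm nu1v3), (Ne.symm hu2b), (Ne.symm bb3.ne'), (Ne.symm hu4a), (Ne.symm nu5v3), (Ne.symm nu6v3)⟩, ⟨m4_5, m4_6, (Ne.symm nu1v4), (Ne.symm nu2v4), (Ne.symm hu3b), (Ne.symm bb4.ne'), (Ne.symm hu5a), (Ne.symm nu6v4)⟩, ⟨m5_6, (Ne.symm nu1v5), (Ne.symm nu2v5), (Ne.symm nu3v5), (Ne.symm hu4b), (Ne.symm bb5.ne'), (Ne.symm hu6a)⟩, ⟨(Ne.symm hu1a), (Ne.symm nu2v6), (Ne.symm nu3v6), (Ne.symm nu4v6), (Ne.symm hu5b), (Ne.symm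 bb6.ne')⟩, ⟨nu1u2, nu1u3, nu1u4, nu1u5, nu1u6⟩, ⟨nu2u3, nu2u4, nu2u5, nu2u6⟩, ⟨nu3u4, nu3u5, nu3u6⟩, ⟨nu4u5, nu4u6⟩, nu5u6⟩
  have hT2 : ((Finset.univ : Finset V) \ ([v1, v2, v3, v4, v5, v6, u1, u2, u3, u4, u5, u6] : List V).toFinset).card = 2 := by
    rw [Finset.card_sdiff_of_subset (Finset.subset_univ _), Finset.card_univ, hcard,
      List.toFinset_card_of_nodup hnodup12]
    simp
  obtain ⟨x, y, hxy, hxyeq⟩ := Finset.card_eq_two.mp hT2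
  have hxmem : x ∉ ([v1, v2, v3, v4, v5, v6, u1, u2, u3, u4, u5, u6] : List V).toFinset := by
    have : x ∈ (Finset.univ : Finset V) \ ([v1, v2, v3, v4, v5, v6, u1, u2, u3, u4, u5, u6] : List V).toFinset := by
      rw [hxyeq]; simp
    exact (Finset.mem_sdiff.mp this).2
  have hymem : y ∉ ([v1, v2, v3, v4, v5, v6, u1, u2, u3, u4, u5, u6] : List V).toFinset := by
    have : y ∈ (Finset.univ : Finset V) \ ([v1, v2, v3, v4, v5, v6, u1, u2, u3, u4, u5, u6] : List V).toFinset := by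
      rw [hxyeq]; simp
    exact (Finset.mem_sdiff.mp this).2
  simp only [List.mem_toFinset, List.mem_cons, List.mem_singleton, List.not_mem_nil, or_false, not_or] at hxmem hymem
  obtain ⟨nxv1, nxv2, nxv3, nxv4, nxv5, nxv6, nxu1, nxu2, nxu3, nxu4, nxu5, nxu6⟩ := hxmem
  obtain ⟨nyv1, nyv2, nyv3, nyv4, nyv5, nyv6, nyu1, nyu2, nyu3, nyu4, nyu5, nyu6⟩ := hymem
  have hnodup14A : ([v1, v2, v3, v4, v5, v6, u1, u2, u3, u4, u5, u6, x, y] : List V).Nodup := by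
    simp only [List.nodup_cons, List.mem_cons, List.mem_singleton, List.not_mem_nil, or_false, not_or, not_false_eq_true,
      List.nodup_nil, and_true]
    exact ⟨⟨m1_2, m1_3, m1_4, m1_5, m1_6, (Ne.symm bb1.ne'), (Ne.symm hu2a), (Ne.symm nu3v1), (Ne.symm nu4v1), (Ne.symm nu5v1), (Ne.symm hu6b), (Ne.symm nxv1), (Ne.symm nyv1)⟩, ⟨m2_3, m2_4, m2_5, m2_6, (Ne.symm hu1b), (Ne.symm bb2.ne'), (Ne.symm hu3a), (Ne.symm nu4v2), (Ne.symm nu5v2), (Ne.symm nu6v2), (Ne.symm nxv2), (Ne.symm nyv2)⟩, ⟨m3_4, m3_5, m3_6, (Ne.symm nu1v3), (Ne.symm hu2b), (Ne.symm bb3.ne'), (Ne.symm hu4a), (Ne.symm nu5v3), (Ne.symm nu6v3), (Ne.symm nxv3), (Ne.symm nyv3)⟩, ⟨m4_5, m4_6, (Ne.symm nu1v4), (Ne.symm nu2v4), (Ne.symm hu3b), (Ne.symm bb4.ne'), (Ne.symm hu5a), (Ne.symm nu6v4), (Ne.symm nxv4), (Ne.symm nyv4)⟩, ⟨m5_6,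 (Ne.symm nu1v5), (Ne.symm nu2v5), (Ne.symm nu3v5), (Ne.symm hu4b), (Ne.symm bb5.ne'), (Ne.symm hu6a), (Ne.symm nxv5), (Ne.symm nyv5)⟩, ⟨(Ne.symm hu1a), (Ne.symm nu2v6), (Ne.symm nu3v6), (Ne.symm nu4v6), (Ne.symm hu5b), (Ne.symm bb6.ne'), (Ne.symm nxv6), (Ne.symm nyv6)⟩, ⟨nu1u2, nu1u3, nu1u4, nu1u5, nu1u6, (Ne.symm nxu1), (Ne.symm nyu1)⟩, ⟨nu2u3, nu2u4, nu2u5, nu2u6, (Ne.symm nxu2), (Ne.symm nyu2)⟩, ⟨nu3u4, nu3u5, nu3u6, (Ne.symm nxu3), (Ne.symm nyu3)⟩, ⟨nu4u5, nu4u6, (Ne.symm nxu4), (Ne.symm nyu4)⟩, ⟨nu5u6, (Ne.symm nxu5), (Ne.symm nyu5)⟩, ⟨(Ne.symm nxu6), (Ne.symm nyu6)⟩, hxy⟩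
  have hunivA : (Finset.univ : Finset V) = ([v1, v2, v3, v4, v5, v6, u1, u2, u3, u4, u5, u6, x, y] : List V).toFinset := by
    refine (Finset.eq_of_subset_of_card_le (Finset.subset_univ _) ?_).symm
    rw [List.toFinset_card_of_nodup hnodup14A, Finset.card_univ, hcard]
    simp
  have hnodup14B : ([v1, v2, v3, v4, v5, v6, u1, u2, u3, u4, u5, u6, y, x] : List V).Nodup := by
    simp only [List.nodup_cons, List.mem_cons, List.mem_singleton, List.not_mem_nil, or_false, not_or, not_false_eq_true,
      List.nodup_nil, and_true]
    exact ⟨⟨m1_2, m1_3, m1_4, m1_5, m1_6, (Ne.symm bb1.ne'), (Ne.symm hu2a), (Ne.symm nu3v1), (Ne.symm nu4v1), (Ne.symm nu5v1), (Ne.symm hu6b), (Ne.symm nyv1), (Ne.symm nxv1)⟩, ⟨m2_3, m2_4, m2_5, m2_6, (Ne.symm hu1b), (Ne.symm bb2.ne'), (Ne.symm hu3a), (Ne.symm nu4v2), (Ne.symm nu5v2), (Ne.symm nu6v2), (Ne.symm nyv2), (Ne.symm nxv2)⟩, ⟨m3_4, m3_5, m3_6, (Ne.symm nu1v3), (Ne.symm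 hu2b), (Ne.symm bb3.ne'), (Ne.symm hu4a), (Ne.symm nu5v3), (Ne.symm nu6v3), (Ne.symm nyv3), (Ne.symm nxv3)⟩, ⟨m4_5, m4_6, (Ne.symm nu1v4), (Ne.symm nu2v4), (Ne.symm hu3b), (Ne.symm bb4.ne'), (Ne.symm hu5a), (Ne.symm nu6v4), (Ne.symm nyv4), (Ne.symm nxv4)⟩, ⟨m5_6, (Ne.symm nu1v5), (Ne.symm nu2v5), (Ne.symm nu3v5), (Ne.symm hu4b), (Ne.symm bb5.ne'), (Ne.symm hu6a), (Ne.symm nyv5), (Ne.symm nxv5)⟩, ⟨(Ne.symm hu1a), (Ne.symm nu2v6), (Ne.symm nu3v6), (Ne.symm nu4v6), (Ne.symm hu5b), (Ne.symm bb6.ne'), (Ne.symm nyv6), (Ne.symm nxv6)⟩, ⟨nu1u2, nu1u3, nu1u4, nu1u5, nu1u6, (Ne.symm nyu1), (Ne.symm nxu1)⟩, ⟨nu2u3, nu2u4, nu2u5, nu2u6, (Ne.symm nyu2), (Ne.symm nxu2)⟩, ⟨nu3u4, nu3u5, nu3u6, (Ne.symm nyu3), (Ne.symm nxu3)⟩,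 ⟨nu4u5, nu4u6, (Ne.symm nyu4), (Ne.symm nxu4)⟩, ⟨nu5u6, (Ne.symm nyu5), (Ne.symm nxu5)⟩, ⟨(Ne.symm nyu6), (Ne.symm nxu6)⟩, (Ne.symm hxy)⟩
  have hunivB : (Finset.univ : Finset V) = ([v1, v2, v3, v4, v5, v6, u1, u2, u3, u4, u5, u6, y, x] : List V).toFinset := by
    refine (Finset.eq_of_subset_of_card_le (Finset.subset_univ _) ?_).symm
    rw [List.toFinset_card_of_nodup hnodup14B, Finset.card_univ, hcard]
    simp
  have hall : ∀ w : V, w = v1 ∨ w = v2 ∨ w = v3 ∨ w = v4 ∨ w = v5 ∨ w = v6 ∨ w = u1 ∨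
      w = u2 ∨ w = u3 ∨ w = u4 ∨ w = u5 ∨ w = u6 ∨ w = x ∨ w = y := by
    intro w
    have h := Finset.mem_univ w
    rw [hunivA] at h
    simpa using h
  have hRu1 : ∀ w : V, G.Adj u1 w → w = v1 ∨ w = u4 ∨ w = x ∨ w = y := by
    intro w hw
    rcases hall w with rfl | rfl | rfl | rfl | rfl | rfl | rfl | rfl | rfl | rfl | rfl | rfl | rfl | rfl
    · exact Or.inl rfl
    · exfalso
      have hmem := (G.mem_neighborFinset _ _).mpr hw.symm
      rw [hN2] at hmem
      simp [bb1.ne', nu1v3, nu1u2] at hmem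
    · exfalso
      have hmem := (G.mem_neighborFinset _ _).mpr hw.symm
      rw [hN3] at hmem
      simp [hu1b, nu1v4, nu1u3] at hmem
    · exfalso
      have hmem := (G.mem_neighborFinset _ _).mpr hw.symm
      rw [hN4] at hmem
      simp [nu1v3, nu1v5, nu1u4] at hmem
    · exfalso
      have hmem := (G.mem_neighborFinset _ _).mpr hw.symm
      rw [hN5] at hmem
      simp [nu1v4, hu1a, nu1u5] at hmem
    · exfalso
      have hmem := (G.mem_neighborFinset _ _).mpr hw.symm
      rw [hN6] at hmem
      simp [nu1v5, bb1.ne', nu1u6] at hmem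
    · exact absurd hw (G.loopless.irrefl _)
    · exact absurd (noC4 hgirth hw bb2.symm a12.symm bb1 hu1b hu2a) (fun hh => hh)
    · exact absurd (noC5 hgirth hw bb3.symm a23.symm a12.symm bb1 nu1v3 hu1b hu3a nu3v1 (Ne.symm m1_3)) (fun hh => hh)
    · exact Or.inr (Or.inl rfl)
    · exact absurd (noC5 hgirth hw bb5.symm a56 a61 bb1 nu1v5 hu1a hu5b nu5v1 (Ne.symm m1_5)) (fun hh => hh)
    · exact absurd (noC4 hgirth hw bb6.symm a61 bb1 hu1a hu6b) (fun hh => hh)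
    · exact Or.inr (Or.inr (Or.inl rfl))
    · exact Or.inr (Or.inr (Or.inr rfl))
  have hTT1 := twoOfThree (hdeg u1) ((G.mem_neighborFinset _ _).mpr bb1.symm)
    (fun w hw => by
      have := hRu1 w ((G.mem_neighborFinset _ _).mp hw)
      simp only [Finset.mem_insert, Finset.mem_singleton]
      tauto)
  simp only [SimpleGraph.mem_neighborFinset] at hTT1
  have hRu2 : ∀ w : V, G.Adj u2 w → w = v2 ∨ w = u5 ∨ w = x ∨ w = y := by
    intro w hw
    rcases hall w with rfl | rfl | rfl | rfl | rfl | rfl | rfl | rfl | rfl | rfl | rfl | rfl | rfl | rfl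
    · exfalso
      have hmem := (G.mem_neighborFinset _ _).mpr hw.symm
      rw [hN1] at hmem
      simp [nu2v6, bb2.ne', (Ne.symm nu1u2)] at hmem
    · exact Or.inl rfl
    · exfalso
      have hmem := (G.mem_neighborFinset _ _).mpr hw.symm
      rw [hN3] at hmem
      simp [bb2.ne', nu2v4, nu2u3] at hmem
    · exfalso
      have hmem := (G.mem_neighborFinset _ _).mpr hw.symm
      rw [hN4] at hmem
      simp [hu2b, nu2v5, nu2u4] at hmem
    · exfalso
      have hmem := (G.mem_neighborFinset _ _).mpr hw.symm
      rw [hN5] at hmem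
      simp [nu2v4, nu2v6, nu2u5] at hmem
    · exfalso
      have hmem := (G.mem_neighborFinset _ _).mpr hw.symm
      rw [hN6] at hmem
      simp [nu2v5, hu2a, nu2u6] at hmem
    · exact absurd (noC4 hgirth hw bb1.symm a12 bb2 hu2a hu1b) (fun hh => hh)
    · exact absurd hw (G.loopless.irrefl _)
    · exact absurd (noC4 hgirth hw bb3.symm a23.symm bb2 hu2b hu3a) (fun hh => hh)
    · exact absurd (noC5 hgirth hw bb4.symm a34.symm a23.symm bb2 nu2v4 hu2b hu4a nu4v2 (Ne.symm m2_4)) (fun hh => hh)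
    · exact Or.inr (Or.inl rfl)
    · exact absurd (noC5 hgirth hw bb6.symm a61 a12 bb2 nu2v6 hu2a hu6b nu6v2 (Ne.symm m2_6)) (fun hh => hh)
    · exact Or.inr (Or.inr (Or.inl rfl))
    · exact Or.inr (Or.inr (Or.inr rfl))
  have hTT2 := twoOfThree (hdeg u2) ((G.mem_neighborFinset _ _).mpr bb2.symm)
    (fun w hw => by
      have := hRu2 w ((G.mem_neighborFinset _ _).mp hw)
      simp only [Finset.mem_insert, Finset.mem_singleton]
      tauto)
  simp only [SimpleGraph.mem_neighborFinset] at hTT2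
  have hRu3 : ∀ w : V, G.Adj u3 w → w = v3 ∨ w = u6 ∨ w = x ∨ w = y := by
    intro w hw
    rcases hall w with rfl | rfl | rfl | rfl | rfl | rfl | rfl | rfl | rfl | rfl | rfl | rfl | rfl | rfl
    · exfalso
      have hmem := (G.mem_neighborFinset _ _).mpr hw.symm
      rw [hN1] at hmem
      simp [nu3v6, hu3a, (Ne.symm nu1u3)] at hmem
    · exfalso
      have hmem := (G.mem_neighborFinset _ _).mpr hw.symm
      rw [hN2] at hmem
      simp [nu3v1, bb3.ne', (Ne.symm nu2u3)] at hmem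
    · exact Or.inl rfl
    · exfalso
      have hmem := (G.mem_neighborFinset _ _).mpr hw.symm
      rw [hN4] at hmem
      simp [bb3.ne', nu3v5, nu3u4] at hmem
    · exfalso
      have hmem := (G.mem_neighborFinset _ _).mpr hw.symm
      rw [hN5] at hmem
      simp [hu3b, nu3v6, nu3u5] at hmem
    · exfalso
      have hmem := (G.mem_neighborFinset _ _).mpr hw.symm
      rw [hN6] at hmem
      simp [nu3v5, nu3v1, nu3u6] at hmem
    · exact absurd (noC5 hgirth hw bb1.symm a12 a23 bb3 nu3v1 hu3a hu1b nu1v3 m1_3) (fun hh => hh)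
    · exact absurd (noC4 hgirth hw bb2.symm a23 bb3 hu3a hu2b) (fun hh => hh)
    · exact absurd hw (G.loopless.irrefl _)
    · exact absurd (noC4 hgirth hw bb4.symm a34.symm bb3 hu3b hu4a) (fun hh => hh)
    · exact absurd (noC5 hgirth hw bb5.symm a45.symm a34.symm bb3 nu3v5 hu3b hu5a nu5v3 (Ne.symm m3_5)) (fun hh => hh)
    · exact Or.inr (Or.inl rfl)
    · exact Or.inr (Or.inr (Or.inl rfl))
    · exact Or.inr (Or.inr (Or.inr rfl))
  have hTT3 := twoOfThree (hdeg u3) ((G.mem_neighborFinset _ _).mpr bb3.symm)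
    (fun w hw => by
      have := hRu3 w ((G.mem_neighborFinset _ _).mp hw)
      simp only [Finset.mem_insert, Finset.mem_singleton]
      tauto)
  simp only [SimpleGraph.mem_neighborFinset] at hTT3
  have hRu4 : ∀ w : V, G.Adj u4 w → w = v4 ∨ w = u1 ∨ w = x ∨ w = y := by
    intro w hw
    rcases hall w with rfl | rfl | rfl | rfl | rfl | rfl | rfl | rfl | rfl | rfl | rfl | rfl | rfl | rfl
    · exfalso
      have hmem := (G.mem_neighborFinset _ _).mpr hw.symm
      rw [hN1] at hmem
      simp [nu4v6, nu4v2, (Ne.symm nu1u4)] at hmem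
    · exfalso
      have hmem := (G.mem_neighborFinset _ _).mpr hw.symm
      rw [hN2] at hmem
      simp [nu4v1, hu4a, (Ne.symm nu2u4)] at hmem
    · exfalso
      have hmem := (G.mem_neighborFinset _ _).mpr hw.symm
      rw [hN3] at hmem
      simp [nu4v2, bb4.ne', (Ne.symm nu3u4)] at hmem
    · exact Or.inl rfl
    · exfalso
      have hmem := (G.mem_neighborFinset _ _).mpr hw.symm
      rw [hN5] at hmem
      simp [bb4.ne', nu4v6, nu4u5] at hmem
    · exfalso
      have hmem := (G.mem_neighborFinset _ _).mpr hw.symm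
      rw [hN6] at hmem
      simp [hu4b, nu4v1, nu4u6] at hmem
    · exact Or.inr (Or.inl rfl)
    · exact absurd (noC5 hgirth hw bb2.symm a23 a34 bb4 nu4v2 hu4a hu2b nu2v4 m2_4) (fun hh => hh)
    · exact absurd (noC4 hgirth hw bb3.symm a34 bb4 hu4a hu3b) (fun hh => hh)
    · exact absurd hw (G.loopless.irrefl _)
    · exact absurd (noC4 hgirth hw bb5.symm a45.symm bb4 hu4b hu5a) (fun hh => hh)
    · exact absurd (noC5 hgirth hw bb6.symm a56.symm a45.symm bb4 nu4v6 hu4b hu6a nu6v4 (Ne.symm m4_6)) (fun hh => hh)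
    · exact Or.inr (Or.inr (Or.inl rfl))
    · exact Or.inr (Or.inr (Or.inr rfl))
  have hTT4 := twoOfThree (hdeg u4) ((G.mem_neighborFinset _ _).mpr bb4.symm)
    (fun w hw => by
      have := hRu4 w ((G.mem_neighborFinset _ _).mp hw)
      simp only [Finset.mem_insert, Finset.mem_singleton]
      tauto)
  simp only [SimpleGraph.mem_neighborFinset] at hTT4
  have hRu5 : ∀ w : V, G.Adj u5 w → w = v5 ∨ w = u2 ∨ w = x ∨ w = y := by
    intro w hw
    rcases hall w with rfl | rfl | rfl | rfl | rfl | rfl | rfl | rfl | rfl | rfl | rfl | rfl | rfl | rfl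
    · exfalso
      have hmem := (G.mem_neighborFinset _ _).mpr hw.symm
      rw [hN1] at hmem
      simp [hu5b, nu5v2, (Ne.symm nu1u5)] at hmem
    · exfalso
      have hmem := (G.mem_neighborFinset _ _).mpr hw.symm
      rw [hN2] at hmem
      simp [nu5v1, nu5v3, (Ne.symm nu2u5)] at hmem
    · exfalso
      have hmem := (G.mem_neighborFinset _ _).mpr hw.symm
      rw [hN3] at hmem
      simp [nu5v2, hu5a, (Ne.symm nu3u5)] at hmem
    · exfalso
      have hmem := (G.mem_neighborFinset _ _).mpr hw.symm
      rw [hN4] at hmem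
      simp [nu5v3, bb5.ne', (Ne.symm nu4u5)] at hmem
    · exact Or.inl rfl
    · exfalso
      have hmem := (G.mem_neighborFinset _ _).mpr hw.symm
      rw [hN6] at hmem
      simp [bb5.ne', nu5v1, nu5u6] at hmem
    · exact absurd (noC5 hgirth hw bb1.symm a61.symm a56.symm bb5 nu5v1 hu5b hu1a nu1v5 m1_5) (fun hh => hh)
    · exact Or.inr (Or.inl rfl)
    · exact absurd (noC5 hgirth hw bb3.symm a34 a45 bb5 nu5v3 hu5a hu3b nu3v5 m3_5) (fun hh => hh)
    · exact absurd (noC4 hgirth hw bb4.symm a45 bb5 hu5a hu4b) (fun hh => hh)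
    · exact absurd hw (G.loopless.irrefl _)
    · exact absurd (noC4 hgirth hw bb6.symm a56.symm bb5 hu5b hu6a) (fun hh => hh)
    · exact Or.inr (Or.inr (Or.inl rfl))
    · exact Or.inr (Or.inr (Or.inr rfl))
  have hTT5 := twoOfThree (hdeg u5) ((G.mem_neighborFinset _ _).mpr bb5.symm)
    (fun w hw => by
      have := hRu5 w ((G.mem_neighborFinset _ _).mp hw)
      simp only [Finset.mem_insert, Finset.mem_singleton]
      tauto)
  simp only [SimpleGraph.mem_neighborFinset] at hTT5
  have hRu6 : ∀ w : V, G.Adj u6 w → w = v6 ∨ w = u3 ∨ w = x ∨ w = y := by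
    intro w hw
    rcases hall w with rfl | rfl | rfl | rfl | rfl | rfl | rfl | rfl | rfl | rfl | rfl | rfl | rfl | rfl
    · exfalso
      have hmem := (G.mem_neighborFinset _ _).mpr hw.symm
      rw [hN1] at hmem
      simp [bb6.ne', nu6v2, (Ne.symm nu1u6)] at hmem
    · exfalso
      have hmem := (G.mem_neighborFinset _ _).mpr hw.symm
      rw [hN2] at hmem
      simp [hu6b, nu6v3, (Ne.symm nu2u6)] at hmem
    · exfalso
      have hmem := (G.mem_neighborFinset _ _).mpr hw.symm
      rw [hN3] at hmem
      simp [nu6v2, nu6v4, (Ne.symm nu3u6)] at hmem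
    · exfalso
      have hmem := (G.mem_neighborFinset _ _).mpr hw.symm
      rw [hN4] at hmem
      simp [nu6v3, hu6a, (Ne.symm nu4u6)] at hmem
    · exfalso
      have hmem := (G.mem_neighborFinset _ _).mpr hw.symm
      rw [hN5] at hmem
      simp [nu6v4, bb6.ne', (Ne.symm nu5u6)] at hmem
    · exact Or.inl rfl
    · exact absurd (noC4 hgirth hw bb1.symm a61.symm bb6 hu6b hu1a) (fun hh => hh)
    · exact absurd (noC5 hgirth hw bb2.symm a12.symm a61.symm bb6 nu6v2 hu6b hu2a nu2v6 m2_6) (fun hh => hh)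
    · exact Or.inr (Or.inl rfl)
    · exact absurd (noC5 hgirth hw bb4.symm a45 a56 bb6 nu6v4 hu6a hu4b nu4v6 m4_6) (fun hh => hh)
    · exact absurd (noC4 hgirth hw bb5.symm a56 bb6 hu6a hu5b) (fun hh => hh)
    · exact absurd hw (G.loopless.irrefl _)
    · exact Or.inr (Or.inr (Or.inl rfl))
    · exact Or.inr (Or.inr (Or.inr rfl))
  have hTT6 := twoOfThree (hdeg u6) ((G.mem_neighborFinset _ _).mpr bb6.symm)
    (fun w hw => by
      have := hRu6 w ((G.mem_neighborFinset _ _).mp hw)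
      simp only [Finset.mem_insert, Finset.mem_singleton]
      tauto)
  simp only [SimpleGraph.mem_neighborFinset] at hTT6
  have hP14 := pairLemma hgirth (hdeg u1) (hdeg u4) bb1.symm bb4.symm
    nu1u4 hxy (Ne.symm nxu1) (Ne.symm nyu1) (Ne.symm nxu4) (Ne.symm nyu4)
    (Ne.symm nxv1) (Ne.symm nyv1) (Ne.symm nu4v1) (Ne.symm nxv4) (Ne.symm nyv4) (Ne.symm nu1v4)
    hTT1 hTT4
  have hP25 := pairLemma hgirth (hdeg u2) (hdeg u5) bb2.symm bb5.symm
    nu2u5 hxy (Ne.symm nxu2) (Ne.symm nyu2) (Ne.symm nxu5) (Ne.symm nyu5)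
    (Ne.symm nxv2) (Ne.symm nyv2) (Ne.symm nu5v2) (Ne.symm nxv5) (Ne.symm nyv5) (Ne.symm nu2v5)
    hTT2 hTT5
  have hP36 := pairLemma hgirth (hdeg u3) (hdeg u6) bb3.symm bb6.symm
    nu3u6 hxy (Ne.symm nxu3) (Ne.symm nyu3) (Ne.symm nxu6) (Ne.symm nyu6)
    (Ne.symm nxv3) (Ne.symm nyv3) (Ne.symm nu6v3) (Ne.symm nxv6) (Ne.symm nyv6) (Ne.symm nu3v6)
    hTT3 hTT6
  obtain ⟨p14, hq14⟩ := hP14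
  rcases hq14 with ⟨h1x, h4y⟩ | ⟨h1y, h4x⟩
  · exact finalStep hgirth a12 a23 a34 a45 a56 a61 bb1 bb2 bb3 bb4 bb5 bb6
      p14 hP25.1 hP36.1 h1x h4y hP25.2 hP36.2 hunivA hnodup14A
  · exact finalStep hgirth a12 a23 a34 a45 a56 a61 bb1 bb2 bb3 bb4 bb5 bb6
      p14 hP25.1 hP36.1 h1y h4x hP25.2.symm hP36.2.symm hunivB hnodup14B

end Helpers

/-- Any 3-regular graph on 14 vertices with girth 6 (i.e. the Heawood graph, the
unique (3,6)-cage) has restrained double Roman domination number 11. -/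
theorem stmt_6 {V : Type*} [Fintype V] (G : SimpleGraph V) [DecidableRel G.Adj]
    (hcard : Fintype.card V = 14) (hreg : G.IsRegularOfDegree 3) (hg : G.girth = 6) :
    rdrNum G = 11 := by
  classical
  have hmem : 11 ∈ {k | ∃ f : V → ℕ, IsRDRD G f ∧ ∑ v, f v = k} := upperBound hcard hreg hg
  refine le_antisymm (Nat.sInf_le hmem) ?_
  refine le_csInf ⟨11, hmem⟩ ?_
  rintro k ⟨f, hf, rfl⟩
  exact lowerBound hcard hreg f hf
end

section
/- If G is a connected triangle-free graph on n ≥ 3 vertices, then γ_rdR(G) ≤ 2·γ_rR(G) − 2. -/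
open Finset

lemma exists_two_nbrs {V : Type*} [Fintype V] (G : SimpleGraph V)
    (hconn : G.Connected) (hn : 3 ≤ Fintype.card V) :
    ∃ x u w : V, u ≠ w ∧ G.Adj x u ∧ G.Adj x w := by
  classical
  by_contra hc
  have hc' : ∀ x u w : V, G.Adj x u → G.Adj x w → u = w := by
    intro x u w h1 h2
    by_contra hne
    exact hc ⟨x, u, w, hne, h1, h2⟩
  have key : ∀ (a b : V) (_ : G.Walk a b), b = a ∨ G.Adj a b := by
    intro a b p
    induction p with
    | nil => exact Or.inl rfl
    | @cons a c b h' q ih =>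
      rcases ih with rfl | hadj
      · exact Or.inr h'
      · exact Or.inl (hc' _ _ _ h'.symm hadj).symm
  have h2 : 1 < Fintype.card V := by omega
  obtain ⟨a, b, hab⟩ := Fintype.exists_pair_of_one_lt_card h2
  have hex : ∃ c : V, c ∉ ({a, b} : Finset V) := by
    by_contra hno
    push_neg at hno
    have hsub : (Finset.univ : Finset V) ⊆ {a, b} := fun c _ => hno c
    have h1 : Fintype.card V ≤ ({a, b} : Finset V).card := by
      rw [← Finset.card_univ]; exact Finset.card_le_card hsub
    rw [Finset.card_pair hab] at h1
    omega
  obtain ⟨c, hc3⟩ := hex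
  simp only [Finset.mem_insert, Finset.mem_singleton, not_or] at hc3
  obtain ⟨hca, hcb⟩ := hc3
  have hb : G.Adj a b := by
    rcases key a b (hconn.preconnected a b).some with h | h
    · exact absurd h.symm hab
    · exact h
  have hcadj : G.Adj a c := by
    rcases key a c (hconn.preconnected a c).some with h | h
    · exact absurd h hca
    · exact h
  exact hcb (hc' a c b hcadj hb)

theorem stmt_7 {V : Type*} [Fintype V] (G : SimpleGraph V)
    (hconn : G.Connected) (hfree : G.CliqueFree 3) (hn : 3 ≤ Fintype.card V) :
    rdrNum G ≤ 2 * rrNum G - 2 := by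
  classical
  have hne : {k | ∃ f : V → ℕ, IsRRD G f ∧ ∑ v, f v = k}.Nonempty := by
    refine ⟨∑ v : V, 1, fun _ => 1, ⟨fun v => by norm_num, ?_, ?_⟩, rfl⟩ <;>
      · intro v hv; simp at hv
  obtain ⟨f, hf, hsum⟩ := Nat.sInf_mem hne
  obtain ⟨hf2, hf0a, hf0b⟩ := hf
  have hrr : ∑ v, f v = rrNum G := hsum
  clear hsum hne
  have hbound : ∀ g : V → ℕ, IsRDRD G g → rdrNum G ≤ ∑ v, g v := fun g hg =>
    Nat.sInf_le ⟨g, hg, rfl⟩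
  rcases lt_or_ge (Finset.univ.filter (fun v => f v = 2)).card 2 with hlt | hge
  · have h01 : (Finset.univ.filter (fun v => f v = 2)).card = 0 ∨
        (Finset.univ.filter (fun v => f v = 2)).card = 1 := by omega
    rcases h01 with h | h
    · -- no vertex with value 2, so f ≡ 1
      have hno2 : ∀ v, f v ≠ 2 := by
        intro v hv
        have hm : v ∈ Finset.univ.filter (fun v => f v = 2) :=
          Finset.mem_filter.mpr ⟨Finset.mem_univ v, hv⟩
        rw [Finset.card_eq_zero] at h
        rw [h] at hm
        exact absurd hm (Finset.notMem_empty v)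
      have hone : ∀ v, f v = 1 := by
        intro v
        have h0 : f v ≠ 0 := by
          intro h0
          obtain ⟨u, _, hu⟩ := hf0a v h0
          exact hno2 u hu
        have := hf2 v
        have := hno2 v
        omega
      have hsf : ∑ v, f v = Fintype.card V := by simp [hone]
      obtain ⟨x, u, w, huw, hxu, hxw⟩ := exists_two_nbrs G hconn hn
      set g : V → ℕ := fun v => if G.Adj x v then 1 else 2 with hgdef
      have hgv : ∀ v, g v = if G.Adj x v then 1 else 2 := fun v => rfl
      have hgRDRD : IsRDRD G g := by
        refine ⟨fun v => ?_, fun v hv => ?_, fun v hv => ?_, fun v hv => ?_⟩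
        · rw [hgv v]; split <;> omega
        · rw [hgv v] at hv; split at hv <;> norm_num at hv
        · rw [hgv v] at hv
          by_cases h' : G.Adj x v
          · refine ⟨x, h'.symm, ?_⟩
            have hx2 : g x = 2 := by rw [hgv x, if_neg (G.irrefl)]
            omega
          · rw [if_neg h'] at hv; norm_num at hv
        · rw [hgv v] at hv; split at hv <;> norm_num at hv
      have hdeg : 2 ≤ (Finset.univ.filter (fun v => G.Adj x v)).card := by
        have hsub : ({u, w} : Finset V) ⊆ Finset.univ.filter (fun v => G.Adj x v) := by
          intro z hz
          simp only [Finset.mem_insert, Finset.mem_singleton] at hz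
          rcases hz with rfl | rfl <;> exact Finset.mem_filter.mpr ⟨Finset.mem_univ _, by assumption⟩
        calc 2 = ({u, w} : Finset V).card := (Finset.card_pair huw).symm
          _ ≤ _ := Finset.card_le_card hsub
      have hsg : ∑ v, g v + (Finset.univ.filter (fun v => G.Adj x v)).card
          = 2 * Fintype.card V := by
        rw [Finset.card_filter, ← Finset.sum_add_distrib]
        have hpt : ∀ v : V, g v + (if G.Adj x v then 1 else 0) = 2 := by
          intro v; rw [hgv v]; split <;> omega
        simp only [hpt, Finset.sum_const, Finset.card_univ, smul_eq_mul, mul_comm]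
      have h1 := hbound g hgRDRD
      rw [← hrr, hsf]
      omega
    · -- exactly one vertex with value 2
      obtain ⟨x, hx⟩ := Finset.card_eq_one.mp h
      have hx2 : f x = 2 := by
        have hm : x ∈ Finset.univ.filter (fun v => f v = 2) := by rw [hx]; simp
        exact (Finset.mem_filter.mp hm).2
      have huniq : ∀ v, f v = 2 → v = x := by
        intro v hv
        have hm : v ∈ Finset.univ.filter (fun v => f v = 2) :=
          Finset.mem_filter.mpr ⟨Finset.mem_univ v, hv⟩
        rw [hx] at hm; exact Finset.mem_singleton.mp hm
      have hno0 : ∀ v, f v ≠ 0 := by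
        intro v hv
        obtain ⟨u, hvu, hu2⟩ := hf0a v hv
        obtain ⟨w, hvw, hw0⟩ := hf0b v hv
        obtain ⟨u', hwu', hu'2⟩ := hf0a w hw0
        have hux : u = x := huniq u hu2
        have hu'x : u' = x := huniq u' hu'2
        subst hux; subst hu'x
        exact hfree _ (SimpleGraph.is3Clique_triple_iff.mpr ⟨hvw, hvu, hwu'⟩)
      have hform : ∀ v, f v = if v = x then 2 else 1 := by
        intro v
        by_cases hvx : v = x
        · rw [if_pos hvx, hvx]; exact hx2
        · rw [if_neg hvx]
          have h2 := hf2 v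
          have h0 := hno0 v
          have : f v ≠ 2 := fun hv => hvx (huniq v hv)
          omega
      have hsf : ∑ v, f v = Fintype.card V + 1 := by
        have hpt : ∀ v : V, f v = 1 + (if v = x then 1 else 0) := by
          intro v; rw [hform v]; split <;> rfl
        simp only [hpt, Finset.sum_add_distrib, Finset.sum_const, Finset.card_univ,
          smul_eq_mul, mul_one]
        rw [Finset.sum_ite_eq' Finset.univ x (fun _ => 1), if_pos (Finset.mem_univ x)]
      have hgRDRD : IsRDRD G (fun _ => 2) := by
        refine ⟨fun v => by norm_num, fun v hv => by simp at hv, fun v hv => by simp at hv,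
          fun v hv => by simp at hv⟩
      have h1 := hbound _ hgRDRD
      simp only [Finset.sum_const, Finset.card_univ, smul_eq_mul] at h1
      rw [← hrr, hsf]
      omega
  · -- at least two vertices with value 2
    set g : V → ℕ := fun v => if f v = 0 then 0 else if f v = 1 then 2 else 3 with hgdef
    have hgv : ∀ v, g v = if f v = 0 then 0 else if f v = 1 then 2 else 3 := fun v => rfl
    have hgval : ∀ v, g v + (if f v = 2 then 1 else 0) = 2 * f v := by
      intro v
      have := hf2 v
      rw [hgv v]
      split_ifs <;> omega
    have hg0 : ∀ v, g v = 0 ↔ f v = 0 := by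
      intro v; rw [hgv v]; split_ifs with h1 h2
      · exact ⟨fun _ => h1, fun _ => rfl⟩
      · exact ⟨fun h' => absurd h' (by norm_num), fun h' => absurd h' h1⟩
      · exact ⟨fun h' => absurd h' (by norm_num), fun h' => absurd h' h1⟩
    have hgRDRD : IsRDRD G g := by
      refine ⟨fun v => ?_, fun v hv => ?_, fun v hv => ?_, fun v hv => ?_⟩
      · rw [hgv v]; split_ifs <;> omega
      · obtain ⟨u, hvu, hu2⟩ := hf0a v ((hg0 v).mp hv)
        refine Or.inl ⟨u, hvu, ?_⟩
        rw [hgv u, hu2]; norm_num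
      · rw [hgv v] at hv; split_ifs at hv <;> norm_num at hv
      · obtain ⟨u, hvu, hu0⟩ := hf0b v ((hg0 v).mp hv)
        exact ⟨u, hvu, (hg0 u).mpr hu0⟩
    have hsg : ∑ v, g v + (Finset.univ.filter (fun v => f v = 2)).card = 2 * ∑ v, f v := by
      rw [Finset.card_filter, ← Finset.sum_add_distrib, Finset.mul_sum]
      exact Finset.sum_congr rfl fun v _ => hgval v
    have h1 := hbound g hgRDRD
    rw [← hrr]
    omega
end

section
/- For every connected graph G, γ_rdR(G) ≥ γ(G) + γ_r(G), where γ is the domination number and γ_r the restrained domination number. -/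
open Finset

theorem stmt_8 {V : Type*} [Fintype V] (G : SimpleGraph V) (hconn : G.Connected) :
    domNum G + rDomNum G ≤ rdrNum G := by
  classical
  have hne : {k | ∃ f : V → ℕ, IsRDRD G f ∧ ∑ v, f v = k}.Nonempty :=
    ⟨∑ v, (3 : ℕ), fun _ => 3, ⟨fun v => le_refl 3, by simp, by simp, by simp⟩, rfl⟩
  obtain ⟨f, ⟨h3, h0, h1, h00⟩, hsum⟩ := Nat.sInf_mem hne
  set S : Finset V := Finset.univ.filter (fun v => 2 ≤ f v) with hS
  set T : Finset V := Finset.univ.filter (fun v => 1 ≤ f v) with hT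
  have hSdom : IsDomSet G ↑S := by
    intro v hv
    simp only [hS, Finset.coe_filter, Set.mem_setOf_eq, Finset.mem_univ, true_and,
      not_le] at hv
    have hcase : f v = 0 ∨ f v = 1 := Nat.le_one_iff_eq_zero_or_eq_one.mp (Nat.lt_succ_iff.mp hv)
    rcases hcase with hv0 | hv1
    · rcases h0 v hv0 with ⟨u, hadj, hu⟩ | ⟨u, w, hadj, _, _, hu, _⟩
      · exact ⟨u, by simp [hS, hu], hadj⟩
      · exact ⟨u, by simp [hS, hu], hadj⟩
    · obtain ⟨u, hadj, hu⟩ := h1 v hv1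
      exact ⟨u, by simp [hS, hu], hadj⟩
  have hTdom : IsRDomSet G ↑T := by
    constructor
    · intro v hv
      simp only [hT, Finset.coe_filter, Set.mem_setOf_eq, Finset.mem_univ, true_and,
        not_le] at hv
      have hv0 : f v = 0 := Nat.lt_one_iff.mp hv
      rcases h0 v hv0 with ⟨u, hadj, hu⟩ | ⟨u, w, hadj, _, _, hu, _⟩
      · exact ⟨u, by simp [hT, hu], hadj⟩
      · exact ⟨u, by simp [hT, hu], hadj⟩
    · intro v hv
      simp only [hT, Finset.coe_filter, Set.mem_setOf_eq, Finset.mem_univ, true_and,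
        not_le] at hv
      have hv0 : f v = 0 := Nat.lt_one_iff.mp hv
      obtain ⟨u, hadj, hu⟩ := h00 v hv0
      refine ⟨u, ?_, hadj⟩
      simp [hT, hu]
  have hcard : S.card + T.card ≤ ∑ v, f v := by
    have h1 : S.card + T.card
        = ∑ v, ((if 2 ≤ f v then 1 else 0) + (if 1 ≤ f v then 1 else 0)) := by
      rw [Finset.sum_add_distrib, hS, hT, Finset.card_filter, Finset.card_filter]
    rw [h1]
    exact Finset.sum_le_sum (fun v _ => by clear hsum hne; split_ifs <;> omega)
  have hd : domNum G ≤ S.card := Nat.sInf_le ⟨S, hSdom, rfl⟩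
  have hr : rDomNum G ≤ T.card := Nat.sInf_le ⟨T, hTdom, rfl⟩
  calc domNum G + rDomNum G ≤ S.card + T.card := Nat.add_le_add hd hr
    _ ≤ ∑ v, f v := hcard
    _ = rdrNum G := hsum
end

section
/- For every connected graph G, γ_rdR(G) = γ(G) + γ_r(G) if and only if G is a star K_{1,n−1} or γ_r2(G) = γ_r(G) = γ(G). -/
open Finset

section auxLemmas

set_option linter.unusedSectionVars false

variable {V : Type*}

private lemma reach_closed (G : SimpleGraph V) (A : Set V)
    (hA : ∀ ⦃u v⦄, G.Adj u v → u ∈ A → v ∈ A) :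
    ∀ ⦃u v⦄, G.Reachable u v → u ∈ A → v ∈ A := by
  intro u v h
  obtain ⟨p⟩ := h
  induction p with
  | nil => exact id
  | cons h' p ih => exact fun hu => ih (hA h' hu)

private lemma star_adj (G : SimpleGraph V) (hconn : G.Connected) {x : V}
    (hx : ∀ ⦃a b : V⦄, G.Adj a b → a = x ∨ b = x) {v : V} (hv : v ≠ x) :
    G.Adj v x := by
  obtain ⟨p⟩ := hconn.preconnected v x
  cases p with
  | nil => exact absurd rfl hv
  | cons h p =>
    rcases hx h with h1 | h2
    · exact absurd h1 hv
    · exact h2 ▸ h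

private lemma star_of_local (G : SimpleGraph V) (hconn : G.Connected)
    (h : ∀ ⦃a b : V⦄, G.Adj a b → (∀ c, G.Adj a c → c = b) ∨ (∀ c, G.Adj b c → c = a)) :
    IsStar G := by
  by_cases he : ∃ a b : V, G.Adj a b
  · obtain ⟨a, b, hab⟩ := he
    by_cases hc : ∃ v s t : V, G.Adj v s ∧ G.Adj v t ∧ s ≠ t
    · obtain ⟨v, s, t, hvs, hvt, hst⟩ := hc
      have hleaf : ∀ ⦃w⦄, G.Adj v w → ∀ ⦃z⦄, G.Adj w z → z = v := by
        intro w hw z hz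
        rcases h hw with h1 | h2
        · exact absurd ((h1 s hvs).trans (h1 t hvt).symm) hst
        · exact h2 z hz
      refine ⟨v, ?_⟩
      intro p q hpq
      by_contra hcon
      push_neg at hcon
      obtain ⟨hp, hq⟩ := hcon
      have hA : ∀ ⦃u w⦄, G.Adj u w → u ∈ {z | z = v ∨ G.Adj v z} →
          w ∈ {z | z = v ∨ G.Adj v z} := by
        intro u w huw hu
        rcases hu with rfl | hu
        · exact Or.inr huw
        · exact Or.inl (hleaf hu huw)
      have hp' : p = v ∨ G.Adj v p :=
        reach_closed G {z | z = v ∨ G.Adj v z} hA (hconn.preconnected v p) (Or.inl rfl)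
      rcases hp' with rfl | hp'
      · exact hp rfl
      · exact hq (hleaf hp' hpq)
    · push_neg at hc
      refine ⟨a, ?_⟩
      intro p q hpq
      by_contra hcon
      push_neg at hcon
      obtain ⟨hp, hq⟩ := hcon
      have hA : ∀ ⦃u w⦄, G.Adj u w → u ∈ {z | z = a ∨ z = b} → w ∈ {z | z = a ∨ z = b} := by
        intro u w huw hu
        rcases hu with rfl | rfl
        · exact Or.inr (hc u w b huw hab)
        · exact Or.inl (hc u w a huw hab.symm)
      have hp' : p = a ∨ p = b :=
        reach_closed G {z | z = a ∨ z = b} hA (hconn.preconnected a p) (Or.inl rfl)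
      rcases hp' with rfl | rfl
      · exact hp rfl
      · exact hq (hc p q a hpq hab.symm)
  · push_neg at he
    obtain ⟨x⟩ := hconn.nonempty
    exact ⟨x, fun a b hab => absurd hab (he a b)⟩

variable [Fintype V]

private lemma rdr_nonempty (G : SimpleGraph V) :
    {k | ∃ f : V → ℕ, IsRDRD G f ∧ ∑ v, f v = k}.Nonempty := by
  refine ⟨_, (fun _ => 2), ⟨fun v => by norm_num, fun v hv => ?_, fun v hv => ?_,
    fun v hv => ?_⟩, rfl⟩
  all_goals simp at hv

private lemma dom_nonempty (G : SimpleGraph V) :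
    {k | ∃ S : Finset V, IsDomSet G ↑S ∧ S.card = k}.Nonempty :=
  ⟨_, univ, fun v hv => absurd (by simp) hv, rfl⟩

private lemma rdom_nonempty (G : SimpleGraph V) :
    {k | ∃ S : Finset V, IsRDomSet G ↑S ∧ S.card = k}.Nonempty :=
  ⟨_, univ, ⟨fun v hv => absurd (by simp) hv, fun v hv => absurd (by simp) hv⟩, rfl⟩

private lemma r2_nonempty (G : SimpleGraph V) :
    {k | ∃ S : Finset V, IsR2DomSet G ↑S ∧ S.card = k}.Nonempty :=
  ⟨_, univ, ⟨fun v hv => absurd (by simp) hv, fun v hv => absurd (by simp) hv⟩, rfl⟩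

private lemma S2_dom (G : SimpleGraph V) {f : V → ℕ} (hf : IsRDRD G f)
    [DecidablePred (fun v => 2 ≤ f v)] :
    IsDomSet G ↑(univ.filter (fun v => 2 ≤ f v)) := by
  obtain ⟨hle3, h0, h1, h0r⟩ := hf
  intro v hv
  simp only [coe_filter, Set.mem_setOf_eq, mem_univ, true_and, not_le] at hv
  interval_cases hfv : f v
  · rcases h0 v hfv with ⟨u, hu, hu3⟩ | ⟨u, w, hu, hw, huw, hu2, hw2⟩
    · exact ⟨u, by simp [hu3], hu⟩
    · exact ⟨u, by simp [hu2], hu⟩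
  · obtain ⟨u, hu, hu2⟩ := h1 v hfv
    exact ⟨u, by simp [hu2], hu⟩

private lemma S1_rdom (G : SimpleGraph V) {f : V → ℕ} (hf : IsRDRD G f)
    [DecidablePred (fun v => 1 ≤ f v)] :
    IsRDomSet G ↑(univ.filter (fun v => 1 ≤ f v)) := by
  obtain ⟨hle3, h0, h1, h0r⟩ := hf
  constructor
  · intro v hv
    simp only [coe_filter, Set.mem_setOf_eq, mem_univ, true_and, not_le, Nat.lt_one_iff] at hv
    rcases h0 v hv with ⟨u, hu, hu3⟩ | ⟨u, w, hu, hw, huw, hu2, hw2⟩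
    · exact ⟨u, by simp [hu3], hu⟩
    · exact ⟨u, by simp [hu2], hu⟩
  · intro v hv
    simp only [coe_filter, Set.mem_setOf_eq, mem_univ, true_and, not_le, Nat.lt_one_iff] at hv
    obtain ⟨u, hu, hu0⟩ := h0r v hv
    exact ⟨u, by simp [hu0], hu⟩

private lemma cards_le_sum (f : V → ℕ) [DecidablePred (fun v => 2 ≤ f v)]
    [DecidablePred (fun v => 1 ≤ f v)] :
    (univ.filter (fun v => 2 ≤ f v)).card + (univ.filter (fun v => 1 ≤ f v)).card ≤ ∑ v, f v := by
  rw [Finset.card_filter, Finset.card_filter, ← Finset.sum_add_distrib]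
  exact Finset.sum_le_sum (fun i _ => by split_ifs <;> omega)

private lemma lb (G : SimpleGraph V) : domNum G + rDomNum G ≤ rdrNum G := by
  classical
  obtain ⟨f, hf, hsum⟩ := Nat.sInf_mem (rdr_nonempty G)
  rw [rdrNum, ← hsum]
  calc domNum G + rDomNum G
      ≤ (univ.filter (fun v => 2 ≤ f v)).card + (univ.filter (fun v => 1 ≤ f v)).card :=
        Nat.add_le_add (Nat.sInf_le ⟨_, S2_dom G hf, rfl⟩) (Nat.sInf_le ⟨_, S1_rdom G hf, rfl⟩)
    _ ≤ ∑ v, f v := cards_le_sum f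

private lemma star_domNum (G : SimpleGraph V) (hconn : G.Connected) {x : V}
    (hx : ∀ ⦃a b : V⦄, G.Adj a b → a = x ∨ b = x) : domNum G = 1 := by
  classical
  have hle : domNum G ≤ 1 := by
    refine Nat.sInf_le ⟨{x}, ?_, card_singleton x⟩
    intro v hv
    have hvx : v ≠ x := by simpa using hv
    exact ⟨x, by simp, star_adj G hconn hx hvx⟩
  have hge : 1 ≤ domNum G := by
    refine le_csInf (dom_nonempty G) ?_
    rintro k ⟨S, hS, rfl⟩
    rw [Nat.one_le_iff_ne_zero]
    intro h0
    rw [Finset.card_eq_zero] at h0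
    subst h0
    obtain ⟨v⟩ := hconn.nonempty
    obtain ⟨u, hu, -⟩ := hS v (by simp)
    simpa using hu
  omega

private lemma star_rDomNum (G : SimpleGraph V) (hconn : G.Connected) {x : V}
    (hx : ∀ ⦃a b : V⦄, G.Adj a b → a = x ∨ b = x) : rDomNum G = Fintype.card V := by
  classical
  have hle : rDomNum G ≤ Fintype.card V :=
    Nat.sInf_le ⟨univ, ⟨fun v hv => absurd (by simp) hv, fun v hv => absurd (by simp) hv⟩,
      card_univ⟩
  have hge : Fintype.card V ≤ rDomNum G := by
    refine le_csInf (rdom_nonempty G) ?_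
    rintro k ⟨S, hS, rfl⟩
    have hSu : S = univ := by
      rw [Finset.eq_univ_iff_forall]
      intro v
      by_contra hv
      have hv' : v ∉ (↑S : Set V) := by simpa using hv
      by_cases hvx : v = x
      · obtain ⟨w, hw, hwadj⟩ := hS.2 v hv'
        have hwx : w ≠ x := fun h => hwadj.ne' (h.trans hvx.symm)
        obtain ⟨s, hs, hsadj⟩ := hS.1 w hw
        have hsx : s = x := (hx hsadj).resolve_left hwx
        exact hv' (by rw [hvx, ← hsx]; exact hs)
      · obtain ⟨s, hs, hsadj⟩ := hS.1 v hv'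
        have hsx : s = x := (hx hsadj).resolve_left hvx
        obtain ⟨w, hw, hwadj⟩ := hS.2 v hv'
        have hwx : w = x := (hx hwadj).resolve_left hvx
        exact hw (hwx ▸ hsx ▸ hs)
    rw [hSu, card_univ]
  omega

private lemma star_rdr_le (G : SimpleGraph V) (hconn : G.Connected) {x : V}
    (hx : ∀ ⦃a b : V⦄, G.Adj a b → a = x ∨ b = x) :
    rdrNum G ≤ Fintype.card V + 1 := by
  classical
  refine Nat.sInf_le ⟨fun v => if v = x then 2 else 1, ⟨?_, ?_, ?_, ?_⟩, ?_⟩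
  · intro v; dsimp only; split_ifs <;> omega
  · intro v hv; dsimp only at hv; split_ifs at hv <;> simp at hv
  · intro v hv
    dsimp only at hv
    have hvx : v ≠ x := by intro h; rw [if_pos h] at hv; simp at hv
    exact ⟨x, star_adj G hconn hx hvx, by simp⟩
  · intro v hv; dsimp only at hv; split_ifs at hv <;> simp at hv
  · have h1 : ∀ v : V, (if v = x then 2 else 1) = 1 + (if v = x then 1 else 0) := by
      intro v; split_ifs <;> rfl
    rw [Finset.sum_congr rfl (fun v _ => h1 v), Finset.sum_add_distrib,
      Finset.sum_const, Finset.sum_ite_eq' univ x (fun _ => 1)]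
    simp [card_univ, Nat.add_comm]

end auxLemmas

theorem stmt_9 {V : Type*} [Fintype V] (G : SimpleGraph V) (hconn : G.Connected) :
    rdrNum G = domNum G + rDomNum G ↔
      IsStar G ∨ (r2DomNum G = rDomNum G ∧ rDomNum G = domNum G) := by
  classical
  constructor
  · intro h
    obtain ⟨f, hf, hsum⟩ := Nat.sInf_mem (rdr_nonempty G)
    have hsum' : ∑ v, f v = domNum G + rDomNum G := by rw [hsum]; exact h
    clear hsum h
    obtain ⟨hle3, h0, h1c, h0r⟩ := hf
    set S2 := univ.filter (fun v => 2 ≤ f v) with hS2def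
    set S1 := univ.filter (fun v => 1 ≤ f v) with hS1def
    have hd2 : domNum G ≤ S2.card := Nat.sInf_le ⟨S2, S2_dom G ⟨hle3, h0, h1c, h0r⟩, rfl⟩
    have hr1 : rDomNum G ≤ S1.card := Nat.sInf_le ⟨S1, S1_rdom G ⟨hle3, h0, h1c, h0r⟩, rfl⟩
    have hcards : S2.card + S1.card ≤ ∑ v, f v := cards_le_sum f
    have e2 : S2.card = domNum G := by omega
    have e1 : S1.card = rDomNum G := by omega
    have hno3 : ∀ v, f v ≤ 2 := by
      by_contra hx
      push_neg at hx
      obtain ⟨v0, hv0⟩ := hx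
      have hlt : S2.card + S1.card < ∑ v, f v := by
        rw [hS2def, hS1def, Finset.card_filter, Finset.card_filter, ← Finset.sum_add_distrib]
        exact Finset.sum_lt_sum (fun i _ => by split_ifs <;> omega)
          ⟨v0, mem_univ v0, by split_ifs <;> omega⟩
      omega
    by_cases hV1 : ∃ u, f u = 1
    · left
      obtain ⟨u, hu1⟩ := hV1
      have key : ∀ c, f c ≠ 0 → (∃ z, G.Adj c z ∧ f z = 0) →
          (∃ s, G.Adj c s ∧ f s ≠ 0) → False := by
        rintro c hc ⟨z, hcz, hz0⟩ ⟨s, hcs, hs0⟩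
        have hcS1 : c ∈ S1 := by
          rw [hS1def]; simp only [mem_filter, mem_univ, true_and]; omega
        have hmem : ∀ w : V, w ∈ (↑(S1.erase c) : Set V) ↔ (w ≠ c ∧ 1 ≤ f w) := by
          intro w; rw [hS1def]; simp [and_comm]
        have hrd : IsRDomSet G ↑(S1.erase c) := by
          constructor
          · intro v hv
            rw [hmem v] at hv
            push_neg at hv
            by_cases hvc : v = c
            · rw [hvc]
              exact ⟨s, (hmem s).2 ⟨hcs.ne', by omega⟩, hcs⟩
            · have hv0 : f v = 0 := by have := hv hvc; omega
              rcases h0 v hv0 with ⟨u', hu', hu3⟩ | ⟨u', w', hu', hw', huw, hu2, hw2⟩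
              · exact absurd hu3 (by have := hno3 u'; omega)
              · by_cases huc : u' = c
                · exact ⟨w', (hmem w').2 ⟨fun hwc => huw (huc.trans hwc.symm), by omega⟩, hw'⟩
                · exact ⟨u', (hmem u').2 ⟨huc, by omega⟩, hu'⟩
          · intro v hv
            rw [hmem v] at hv
            push_neg at hv
            by_cases hvc : v = c
            · rw [hvc]
              exact ⟨z, fun hm => by have := ((hmem z).1 hm).2; omega, hcz⟩
            · have hv0 : f v = 0 := by have := hv hvc; omega
              obtain ⟨z', hz', hz'0⟩ := h0r v hv0
              exact ⟨z', fun hm => by have := ((hmem z').1 hm).2; omega, hz'⟩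
        have hle : rDomNum G ≤ (S1.erase c).card := Nat.sInf_le ⟨_, hrd, rfl⟩
        rw [card_erase_of_mem hcS1] at hle
        have hpos : 1 ≤ S1.card := card_pos.2 ⟨c, hcS1⟩
        omega
      have hV0 : ∀ v, f v ≠ 0 := by
        intro x hx0
        have hA : ∀ ⦃p q⦄, G.Adj p q → p ∈ {v | f v = 0 ∨ ∃ z, G.Adj v z ∧ f z = 0} →
            q ∈ {v | f v = 0 ∨ ∃ z, G.Adj v z ∧ f z = 0} := by
          intro p q hpq hp
          by_cases hq : f q = 0
          · exact Or.inl hq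
          · by_cases hp0 : f p = 0
            · exact Or.inr ⟨p, hpq.symm, hp0⟩
            · rcases hp with hp0' | ⟨z, hz, hz0⟩
              · exact absurd hp0' hp0
              · exact (key p hp0 ⟨z, hz, hz0⟩ ⟨q, hpq, hq⟩).elim
        have hu' : (f u = 0 ∨ ∃ z, G.Adj u z ∧ f z = 0) → False := by
          rintro (h0' | ⟨z, hz, hz0⟩)
          · omega
          · obtain ⟨s, hus, hs2⟩ := h1c u hu1
            exact key u (by omega) ⟨z, hz, hz0⟩ ⟨s, hus, by omega⟩
        exact hu' (reach_closed G {v | f v = 0 ∨ ∃ z, G.Adj v z ∧ f z = 0} hA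
          (hconn.preconnected x u) (Or.inl hx0))
      have hS1u : S1 = univ := by
        rw [hS1def]
        ext v
        simp only [mem_filter, mem_univ, true_and, iff_true]
        have := hV0 v; omega
      have hn : rDomNum G = Fintype.card V := by rw [← e1, hS1u, card_univ]
      refine star_of_local G hconn ?_
      intro a b hab
      by_contra hcon
      push_neg at hcon
      obtain ⟨⟨a', haa', ha'b⟩, ⟨b', hbb', hb'a⟩⟩ := hcon
      have hmem2 : ∀ w : V, w ∈ (↑((univ.erase a).erase b) : Set V) ↔ (w ≠ a ∧ w ≠ b) := by
        intro w; simp [and_comm]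
      have hmemb : b ∈ univ.erase a := mem_erase.2 ⟨hab.ne', mem_univ b⟩
      have hrd : IsRDomSet G ↑((univ.erase a).erase b) := by
        constructor
        · intro v hv
          rw [hmem2 v] at hv
          push_neg at hv
          by_cases hva : v = a
          · rw [hva]
            exact ⟨a', (hmem2 a').2 ⟨haa'.ne', ha'b⟩, haa'⟩
          · have hvb : v = b := hv hva
            rw [hvb]
            exact ⟨b', (hmem2 b').2 ⟨hb'a, hbb'.ne'⟩, hbb'⟩
        · intro v hv
          rw [hmem2 v] at hv
          push_neg at hv
          by_cases hva : v = a
          · rw [hva]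
            exact ⟨b, fun hm => ((hmem2 b).1 hm).2 rfl, hab⟩
          · have hvb : v = b := hv hva
            rw [hvb]
            exact ⟨a, fun hm => ((hmem2 a).1 hm).1 rfl, hab.symm⟩
      have hle : rDomNum G ≤ ((univ.erase a).erase b).card := Nat.sInf_le ⟨_, hrd, rfl⟩
      rw [card_erase_of_mem hmemb, card_erase_of_mem (mem_univ a), card_univ] at hle
      have h2n : 2 ≤ Fintype.card V := Fintype.one_lt_card_iff_nontrivial.2 ⟨a, b, hab.ne⟩
      omega
    · right
      push_neg at hV1
      have hS12 : S1 = S2 := by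
        rw [hS1def, hS2def]
        ext v
        simp only [mem_filter, mem_univ, true_and]
        have := hV1 v; omega
      have hr2le : r2DomNum G ≤ S2.card := by
        refine Nat.sInf_le ⟨S2, ⟨?_, ?_⟩, rfl⟩
        · intro v hv
          have hv0 : f v = 0 := by
            have hv2 : ¬ 2 ≤ f v := by
              intro h2
              exact hv (by rw [hS2def]; simp only [coe_filter, Set.mem_setOf_eq, mem_univ,
                true_and]; exact h2)
            have := hV1 v; omega
          rcases h0 v hv0 with ⟨u', hu', hu3⟩ | ⟨u', w', hu', hw', huw, hu2, hw2⟩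
          · exact absurd hu3 (by have := hno3 u'; omega)
          · refine ⟨u', w', ?_, ?_, huw, hu', hw'⟩
            · rw [hS2def]; simp only [coe_filter, Set.mem_setOf_eq, mem_univ, true_and]; omega
            · rw [hS2def]; simp only [coe_filter, Set.mem_setOf_eq, mem_univ, true_and]; omega
        · intro v hv
          have hv0 : f v = 0 := by
            have hv2 : ¬ 2 ≤ f v := by
              intro h2
              exact hv (by rw [hS2def]; simp only [coe_filter, Set.mem_setOf_eq, mem_univ,
                true_and]; exact h2)
            have := hV1 v; omega
          obtain ⟨z, hz, hz0⟩ := h0r v hv0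
          refine ⟨z, ?_, hz⟩
          rw [hS2def]
          simp only [coe_filter, Set.mem_setOf_eq, mem_univ, true_and]
          omega
      have hrd_le_r2 : rDomNum G ≤ r2DomNum G := by
        obtain ⟨S, hS, hcard⟩ := Nat.sInf_mem (r2_nonempty G)
        have hle : rDomNum G ≤ S.card := by
          refine Nat.sInf_le ⟨S, ⟨?_, hS.2⟩, rfl⟩
          intro v hv
          obtain ⟨u', w', huS, hwS, huw, hadju, hadjw⟩ := hS.1 v hv
          exact ⟨u', huS, hadju⟩
        have hcard' : S.card = r2DomNum G := hcard
        clear hcard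
        omega
      have hcc : S1.card = S2.card := by rw [hS12]
      exact ⟨by omega, by omega⟩
  · intro h
    rcases h with ⟨x, hx⟩ | ⟨h1, h2⟩
    · have hd := star_domNum G hconn hx
      have hr := star_rDomNum G hconn hx
      have hu := star_rdr_le G hconn hx
      have hl := lb G
      omega
    · obtain ⟨S, hS, hcard⟩ := Nat.sInf_mem (r2_nonempty G)
      have hcard' : S.card = r2DomNum G := hcard
      clear hcard
      have hle : rdrNum G ≤ 2 * S.card := by
        refine Nat.sInf_le ⟨fun v => if v ∈ S then 2 else 0, ⟨?_, ?_, ?_, ?_⟩, ?_⟩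
        · intro v; dsimp only; split_ifs <;> omega
        · intro v hv
          dsimp only at hv
          have hvS : v ∉ (↑S : Set V) := by
            intro hm
            rw [if_pos (mem_coe.1 hm)] at hv
            omega
          obtain ⟨u', w', huS, hwS, huw, hadju, hadjw⟩ := hS.1 v hvS
          exact Or.inr ⟨u', w', hadju, hadjw, huw,
            by simp [if_pos (mem_coe.1 huS)], by simp [if_pos (mem_coe.1 hwS)]⟩
        · intro v hv
          dsimp only at hv
          split_ifs at hv <;> simp at hv
        · intro v hv
          dsimp only at hv
          have hvS : v ∉ (↑S : Set V) := by
            intro hm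
            rw [if_pos (mem_coe.1 hm)] at hv
            omega
          obtain ⟨z, hz, hadj⟩ := hS.2 v hvS
          have hzS : z ∉ S := fun hm => hz (mem_coe.2 hm)
          exact ⟨z, hadj, by simp [hzS]⟩
        · have : ∑ v : V, (if v ∈ S then (2:ℕ) else 0) = 2 * S.card := by
            rw [Finset.sum_ite_mem, univ_inter, Finset.sum_const, smul_eq_mul, mul_comm]
          exact this
      have hl := lb G
      omega
end

section
/- For an even integer n ≥ 6, the cocktail-party graph H_n obtained from the complete graph K_n by deleting a perfect matching satisfies γ_rdR(H_n) = 4. -/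
open Finset

/-- The cocktail-party graph `K_{2m}` minus a perfect matching, on vertex set
`Fin m × Fin 2`: two vertices are adjacent iff they differ in the first coordinate. -/
def cocktailParty (m : ℕ) : SimpleGraph (Fin m × Fin 2) :=
  SimpleGraph.fromRel (fun a b => a.1 ≠ b.1)

lemma cp_adj {m : ℕ} {a b : Fin m × Fin 2} :
    (cocktailParty m).Adj a b ↔ a.1 ≠ b.1 := by
  simp only [cocktailParty, SimpleGraph.fromRel_adj]
  constructor
  · rintro ⟨-, h | h⟩
    · exact h
    · exact h.symm
  · intro h
    exact ⟨fun e => h (congrArg Prod.fst e), Or.inl h⟩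

lemma pair_le_sum {V : Type*} [Fintype V] [DecidableEq V] (f : V → ℕ) {a b : V} (hab : a ≠ b) :
    f a + f b ≤ ∑ v, f v := by
  calc f a + f b = ∑ v ∈ ({a, b} : Finset V), f v := by rw [Finset.sum_pair hab]
  _ ≤ ∑ v, f v := Finset.sum_le_sum_of_subset (Finset.subset_univ _)

theorem stmt_10 (m : ℕ) (hm : 3 ≤ m) : rdrNum (cocktailParty m) = 4 := by
  have h01 : (0 : ℕ) < m := by omega
  have h11 : (1 : ℕ) < m := by omega
  have h21 : (2 : ℕ) < m := by omega
  set z : Fin m := ⟨0, h01⟩ with hz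
  set o : Fin m := ⟨1, h11⟩ with ho
  set t : Fin m := ⟨2, h21⟩ with ht
  have hmem : 4 ∈ {k | ∃ f : Fin m × Fin 2 → ℕ,
      IsRDRD (cocktailParty m) f ∧ ∑ v, f v = k} := by
    refine ⟨fun p => if p.1 = z then 2 else 0, ⟨?_, ?_, ?_, ?_⟩, ?_⟩
    · intro v; dsimp only; split <;> omega
    · intro v hv
      have hv1 : v.1 ≠ z := by
        intro h; simp [h] at hv
      refine Or.inr ⟨(z, 0), (z, 1), ?_, ?_, ?_, by simp, by simp⟩
      · exact cp_adj.mpr hv1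
      · exact cp_adj.mpr hv1
      · intro h; have := congrArg Prod.snd h; simp at this
    · intro v hv
      exfalso; by_cases h : v.1 = z <;> simp [h] at hv
    · intro v hv
      have hv1 : v.1 ≠ z := by
        intro h; simp [h] at hv
      refine ⟨(if v.1 = o then t else o, 0), cp_adj.mpr ?_, ?_⟩
      · by_cases h : v.1 = o
        · simp only [h, if_pos rfl]
          intro e; apply absurd (congrArg Fin.val e); simp [ho, ht]
        · simp only [if_neg h]
          exact h
      · by_cases h : v.1 = o <;>
          simp [h, show t ≠ z from fun e => by simpa [ht, hz] using congrArg Fin.val e,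
            show o ≠ z from fun e => by simpa [ho, hz] using congrArg Fin.val e]
    · rw [Fintype.sum_prod_type]
      rw [Finset.sum_eq_single z]
      · simp
      · intro b _ hb; simp [hb]
      · intro h; exact absurd (Finset.mem_univ z) h
  refine le_antisymm (Nat.sInf_le hmem) (le_csInf ⟨4, hmem⟩ ?_)
  rintro k ⟨f, ⟨hf3, hf0, hf1, hfr⟩, rfl⟩
  by_cases hzz : ∃ v, f v = 0
  · obtain ⟨v, hv⟩ := hzz
    rcases hf0 v hv with ⟨u, hadj, hu3⟩ | ⟨u, w, _, _, huw, hu2, hw2⟩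
    · set w : Fin m × Fin 2 := (u.1, 1 - u.2) with hw
      have h2 : ∀ j : Fin 2, 1 - j ≠ j := by decide
      have hne : w ≠ u := fun h => h2 u.2 (congrArg Prod.snd h)
      by_cases hwz : f w = 0
      · rcases hf0 w hwz with ⟨u', hadj', hu'3⟩ | ⟨a, b, _, _, hab, ha2, hb2⟩
        · have hne' : u ≠ u' := by
            intro h
            exact (cp_adj.mp hadj') (by rw [hw, ← h])
          have := pair_le_sum f hne'
          omega
        · have := pair_le_sum f hab
          omega
      · have := pair_le_sum f hne
        omega
    · have := pair_le_sum f huw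
      omega
  · push_neg at hzz
    have h1 : ∀ v ∈ Finset.univ, 1 ≤ f v :=
      fun v _ => Nat.one_le_iff_ne_zero.2 (hzz v)
    have := Finset.card_nsmul_le_sum Finset.univ f 1 h1
    simp only [Finset.card_univ, Fintype.card_prod, Fintype.card_fin, smul_eq_mul,
      mul_one] at this
    exact le_trans (by omega) this
end

section
/- For p ≥ 3, the Cartesian product of two complete graphs K_p □ K_p (the rook's graph) satisfies γ_rdR(K_p □ K_p) = 2p. -/
open Finset

theorem stmt_11 (p : ℕ) (hp : 3 ≤ p) :
    rdrNum ((⊤ : SimpleGraph (Fin p)) □ (⊤ : SimpleGraph (Fin p))) = 2 * p := by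
  set G := ((⊤ : SimpleGraph (Fin p)) □ (⊤ : SimpleGraph (Fin p))) with hG
  have hadj : ∀ a b : Fin p × Fin p, G.Adj a b ↔
      (a.1 ≠ b.1 ∧ a.2 = b.2) ∨ (a.2 ≠ b.2 ∧ a.1 = b.1) := by
    intro a b
    simp [hG, SimpleGraph.boxProd_adj]
  have hmem : 2 * p ∈ {k | ∃ f : (Fin p × Fin p) → ℕ, IsRDRD G f ∧ ∑ v, f v = k} := by
    refine ⟨fun v => if v.1 = v.2 then 2 else 0, ⟨?_, ?_, ?_, ?_⟩, ?_⟩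
    · intro v; dsimp only; split <;> omega
    · rintro ⟨x, y⟩ hv
      dsimp only at hv
      have hxy : x ≠ y := by intro h; simp [h] at hv
      refine Or.inr ⟨(x, x), (y, y), ?_, ?_, ?_, by simp, by simp⟩
      · rw [hadj]; exact Or.inr ⟨Ne.symm hxy, rfl⟩
      · rw [hadj]; exact Or.inl ⟨hxy, rfl⟩
      · simp [Prod.ext_iff]; intro h; exact hxy h
    · rintro ⟨x, y⟩ hv
      dsimp only at hv
      split at hv <;> omega
    · rintro ⟨x, y⟩ hv
      dsimp only at hv
      have hxy : x ≠ y := by intro h; simp [h] at hv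
      have hns : ¬ (Finset.univ : Finset (Fin p)) ⊆ {x, y} := by
        intro h
        have h1 := Finset.card_le_card h
        have h2 : ({x, y} : Finset (Fin p)).card ≤ 2 :=
          (Finset.card_insert_le _ _).trans (by simp)
        simp only [Finset.card_univ, Fintype.card_fin] at h1
        omega
      obtain ⟨z, -, hz⟩ := Finset.not_subset.mp hns
      simp only [Finset.mem_insert, Finset.mem_singleton, not_or] at hz
      refine ⟨(x, z), ?_, ?_⟩
      · rw [hadj]; exact Or.inr ⟨fun h => hz.2 h.symm, rfl⟩
      · have hxz : x ≠ z := fun h => hz.1 h.symm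
        simp [hxz]
    · rw [Fintype.sum_prod_type]
      have : ∀ x : Fin p, (∑ y : Fin p, if x = y then 2 else 0) = 2 := by
        intro x
        rw [Finset.sum_ite_eq]
        simp
      simp only [this]
      simp [mul_comm]
  apply le_antisymm
  · exact Nat.sInf_le hmem
  · refine le_csInf ⟨2 * p, hmem⟩ ?_
    rintro k ⟨f, ⟨hle3, h0, h1, -⟩, rfl⟩
    by_cases hrow : ∀ x : Fin p, 2 ≤ ∑ y, f (x, y)
    · calc 2 * p = ∑ _x : Fin p, 2 := by simp [mul_comm]
        _ ≤ ∑ x, ∑ y, f (x, y) := Finset.sum_le_sum (fun x _ => hrow x)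
        _ = ∑ v, f v := (Fintype.sum_prod_type _).symm
    · push_neg at hrow
      obtain ⟨x₀, hx₀⟩ := hrow
      have hrowle : ∀ y, f (x₀, y) ≤ 1 := by
        intro y
        have h := Finset.single_le_sum (f := fun y => f (x₀, y))
          (fun _ _ => Nat.zero_le _) (Finset.mem_univ y)
        omega
      have hin : ∀ y : Fin p, ∀ u : Fin p × Fin p, G.Adj (x₀, y) u → 2 ≤ f u →
          2 ≤ ∑ x, f (x, y) := by
        intro y u hadju hfu
        rw [hadj] at hadju
        rcases hadju with ⟨-, h2⟩ | ⟨-, h1'⟩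
        · have hu : u = (u.1, y) := Prod.ext rfl h2.symm
          have h := Finset.single_le_sum (f := fun x => f (x, y))
            (fun _ _ => Nat.zero_le _) (Finset.mem_univ u.1)
          rw [← hu] at h
          omega
        · have hu : u = (x₀, u.2) := Prod.ext h1'.symm rfl
          have h := hrowle u.2
          rw [← hu] at h
          omega
      have hcol : ∀ y : Fin p, 2 ≤ ∑ x, f (x, y) := by
        intro y
        have hv := hrowle y
        rcases Nat.le_one_iff_eq_zero_or_eq_one.mp hv with h | h
        · rcases h0 _ h with ⟨u, hu, hfu⟩ | ⟨u, w, hu, hw, -, hfu, -⟩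
          · exact hin y u hu (by omega)
          · exact hin y u hu (by omega)
        · obtain ⟨u, hu, hfu⟩ := h1 _ h
          exact hin y u hu hfu
      calc 2 * p = ∑ _y : Fin p, 2 := by simp [mul_comm]
        _ ≤ ∑ y, ∑ x, f (x, y) := Finset.sum_le_sum (fun y _ => hcol y)
        _ = ∑ v, f v := (Fintype.sum_prod_type_right _).symm
end

section
/- If T is a tree of order n ≥ 2 that is not a star K_{1,n−1}, then γ_rdR(T) ≥ n + 2. -/
open Finset

section TreeAux

open SimpleGraph Walk

variable {V : Type*} {G : SimpleGraph V} [DecidableEq V]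

lemma tree_step (hT : G.IsTree) {r u v : V} {p : G.Walk r u} {q : G.Walk r v}
    (hp : p.IsPath) (hq : q.IsPath) (h : G.Adj u v) :
    q = p.concat h ∨ p = q.concat h.symm := by
  by_cases hu : u ∈ q.support
  · left
    have h1 : q.takeUntil u hu = p := (hT.existsUnique_path r u).unique (hq.takeUntil hu) hp
    have hsingle : (Walk.cons h (Walk.nil)).IsPath := by
      refine Walk.IsPath.nil.cons ?_
      simp [h.ne]
    have h2 : q.dropUntil u hu = Walk.cons h Walk.nil :=
      (hT.existsUnique_path u v).unique (hq.dropUntil hu) hsingle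
    rw [Walk.concat_eq_append, ← h1, ← h2, Walk.take_spec]
  · right
    have hp2 : (q.concat h.symm).IsPath := by
      rw [← Walk.isPath_reverse_iff, Walk.reverse_concat]
      refine hq.reverse.cons ?_
      simpa [Walk.support_reverse] using hu
    exact (hT.existsUnique_path r u).unique hp hp2

/-- the neighbor of `v` on the unique path from `v` back to the root `r`
(junk value `v` itself when `v = r`). -/
noncomputable def treeParent (hT : G.IsTree) (r : V) : V → V :=
  fun v => ((hT.existsUnique_path r v).choose).reverse.getVert 1

set_option linter.unusedSectionVars false

lemma treeParent_concat (hT : G.IsTree) {r u v : V} (p : G.Walk r u) (h : G.Adj u v)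
    (hE : (hT.existsUnique_path r v).choose = p.concat h) : treeParent hT r v = u := by
  unfold treeParent
  rw [hE, Walk.reverse_concat, Walk.getVert_cons_succ, Walk.getVert_zero]

lemma treeParent_self (hT : G.IsTree) (r : V) : treeParent hT r r = r := by
  unfold treeParent
  have h : (hT.existsUnique_path r r).choose = Walk.nil :=
    (hT.existsUnique_path r r).unique (hT.existsUnique_path r r).choose_spec.1 Walk.IsPath.nil
  rw [h]
  rfl

lemma treeParent_adj (hT : G.IsTree) (r : V) {u v : V} (h : G.Adj u v) :
    treeParent hT r v = u ∨ treeParent hT r u = v := by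
  rcases tree_step hT (hT.existsUnique_path r u).choose_spec.1
      (hT.existsUnique_path r v).choose_spec.1 h with hE | hE
  · exact Or.inl (treeParent_concat hT _ h hE)
  · exact Or.inr (treeParent_concat hT _ h.symm hE)

lemma treeParent_ne_root (hT : G.IsTree) (r : V) {u v : V} (h : G.Adj u v)
    (hp : treeParent hT r v = u) : v ≠ r := by
  rintro rfl
  rw [treeParent_self] at hp
  exact h.ne hp.symm

end TreeAux

theorem stmt_12 {V : Type*} [Fintype V] (G : SimpleGraph V) (hT : G.IsTree)
    (hn : 2 ≤ Fintype.card V) (hstar : ¬ IsStar G) :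
    Fintype.card V + 2 ≤ rdrNum G := by
  classical
  have hne : {k | ∃ f : V → ℕ, IsRDRD G f ∧ ∑ v, f v = k}.Nonempty := by
    refine ⟨∑ _v : V, 3, fun _ => 3, ⟨fun v => le_refl 3, ?_, ?_, ?_⟩, rfl⟩ <;>
      intro v hv <;> simp at hv
  refine le_csInf hne ?_
  rintro k ⟨f, ⟨hle3, h0dom, h1dom, h0res⟩, rfl⟩
  set n := Fintype.card V with hndef
  set V0 : Finset V := univ.filter (fun v => f v = 0) with hV0def
  set V1 : Finset V := univ.filter (fun v => f v = 1) with hV1def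
  set V2 : Finset V := univ.filter (fun v => f v = 2) with hV2def
  set V3 : Finset V := univ.filter (fun v => f v = 3) with hV3def
  have hkey : ∑ v, f v + V0.card = n + (V2.card + 2 * V3.card) := by
    calc ∑ v, f v + V0.card = ∑ v, (f v + (if f v = 0 then 1 else 0)) := by
          rw [sum_add_distrib, hV0def, card_filter]
      _ = ∑ v : V, (1 + ((if f v = 2 then 1 else 0) + 2 * (if f v = 3 then 1 else 0))) := by
          refine sum_congr rfl fun v _ => ?_
          have := hle3 v
          interval_cases h : f v <;> simp
      _ = n + (V2.card + 2 * V3.card) := by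
          rw [sum_add_distrib, sum_add_distrib, ← mul_sum, hV2def, hV3def,
            ← card_filter, ← card_filter, sum_const, card_univ, smul_eq_mul, mul_one]
  have hpart : V0.card + V1.card + V2.card + V3.card = n := by
    rw [hV0def, hV1def, hV2def, hV3def, card_filter, card_filter, card_filter, card_filter,
      ← sum_add_distrib, ← sum_add_distrib, ← sum_add_distrib]
    calc _ = ∑ _v : V, 1 := by
          refine sum_congr rfl fun v _ => ?_
          have := hle3 v
          interval_cases h : f v <;> simp
      _ = n := by rw [sum_const, card_univ, smul_eq_mul, mul_one]
  -- main claim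
  suffices hmain : V0.card + 2 ≤ V2.card + 2 * V3.card by omega

  rcases Finset.eq_empty_or_nonempty V0 with hV0e | ⟨r, hr⟩
  · -- no zero vertices: rule out total weight surplus < 2
    by_contra hcon
    push_neg at hcon
    have hc0 : V0.card = 0 := by rw [hV0e]; exact Finset.card_empty
    have hV3e : V3 = ∅ := by rw [← Finset.card_eq_zero]; omega
    have hfv : ∀ v : V, v ∉ V2 → f v = 1 := by
      intro v hv
      have h3 := hle3 v
      have h0 : f v ≠ 0 := by
        intro h
        have : v ∈ V0 := by rw [hV0def]; simp [h]
        rw [hV0e] at this; simp at this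
      have h2' : f v ≠ 2 := by
        intro h; exact hv (by rw [hV2def]; simp [h])
      have h3' : f v ≠ 3 := by
        intro h
        have : v ∈ V3 := by rw [hV3def]; simp [h]
        rw [hV3e] at this; simp at this
      omega
    have hV2c : V2.card = 1 := by
      rcases Nat.lt_or_ge V2.card 1 with h | h
      · exfalso
        have hV2e : V2 = ∅ := by rw [← Finset.card_eq_zero]; omega
        obtain ⟨v⟩ : Nonempty V := Fintype.card_pos_iff.mp (by omega)
        obtain ⟨u, _, h2u⟩ := h1dom v (hfv v (by rw [hV2e]; exact Finset.notMem_empty v))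
        have := hfv u (by rw [hV2e]; exact Finset.notMem_empty u)
        omega
      · omega
    obtain ⟨x, hx⟩ := Finset.card_eq_one.mp hV2c
    have hadjx : ∀ v : V, v ≠ x → G.Adj v x := by
      intro v hv
      have hv1 : f v = 1 := hfv v (by rw [hx]; simp [hv])
      obtain ⟨u, hadj, h2u⟩ := h1dom v hv1
      have hu2 : u ∈ V2 := by
        have h3 := hle3 u
        have hu3 : f u ≠ 3 := by
          intro h
          have : u ∈ V3 := by rw [hV3def]; simp [h]
          rw [hV3e] at this; simp at this
        have : f u = 2 := by omega
        rw [hV2def]; simp [this]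
      rw [hx, Finset.mem_singleton] at hu2
      rwa [hu2] at hadj
    apply hstar
    refine ⟨x, fun a b hab => ?_⟩
    by_contra hc
    push_neg at hc
    obtain ⟨ha, hb⟩ := hc
    have p1 : (SimpleGraph.Walk.cons hab SimpleGraph.Walk.nil : G.Walk a b).IsPath := by
      refine SimpleGraph.Walk.IsPath.nil.cons ?_
      simp [hab.ne]
    have p2 : (SimpleGraph.Walk.cons (hadjx a ha) (SimpleGraph.Walk.cons (hadjx b hb).symm
        SimpleGraph.Walk.nil) : G.Walk a b).IsPath := by
      refine (SimpleGraph.Walk.IsPath.nil.cons ?_).cons ?_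
      · simp only [SimpleGraph.Walk.support_nil, List.mem_singleton]
        exact fun h => hb h.symm
      · simp only [SimpleGraph.Walk.support_cons, SimpleGraph.Walk.support_nil,
          List.mem_cons, List.mem_singleton]
        push_neg
        exact ⟨ha, hab.ne, by simp⟩
    have heq := (hT.existsUnique_path a b).unique p1 p2
    have := congrArg SimpleGraph.Walk.length heq
    simp [SimpleGraph.Walk.length_cons] at this
  · -- V0 nonempty
    have hr0 : f r = 0 := by rw [hV0def] at hr; exact (Finset.mem_filter.mp hr).2
    set pr : V → V := treeParent hT r with hprdef
    have pr_r : pr r = r := treeParent_self hT r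
    have K2 : ∀ {u v : V}, G.Adj u v → pr v = u ∨ pr u = v := fun h => treeParent_adj hT r h
    have prne : ∀ {u v : V}, G.Adj u v → pr v = u → v ≠ r :=
      fun h hp => treeParent_ne_root hT r h hp
    set C1 := univ.filter (fun v => v ≠ r ∧ f v = 0 ∧ f (pr v) = 0) with hC1def
    set CA := univ.filter (fun v => (f v = 0 ∧ f (pr v) = 3) ∨ (f v = 3 ∧ f (pr v) = 0)) with hCAdef
    set CB := univ.filter (fun v => (f v = 0 ∧ f (pr v) = 2) ∨ (f v = 2 ∧ f (pr v) = 0)) with hCBdef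
    set C4 := univ.filter (fun v => (f v = 1 ∧ 2 ≤ f (pr v)) ∨ (2 ≤ f v ∧ f (pr v) = 1)) with hC4def
    have hCA_ne : ∀ v ∈ CA, v ≠ r := by
      intro v hv
      rintro rfl
      rw [hCAdef] at hv
      simp only [mem_filter, mem_univ, true_and] at hv
      rw [pr_r] at hv
      omega
    have hCB_ne : ∀ v ∈ CB, v ≠ r := by
      intro v hv
      rintro rfl
      rw [hCBdef] at hv
      simp only [mem_filter, mem_univ, true_and] at hv
      rw [pr_r] at hv
      omega
    have hC4_ne : ∀ v ∈ C4, v ≠ r := by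
      intro v hv
      rintro rfl
      rw [hC4def] at hv
      simp only [mem_filter, mem_univ, true_and] at hv
      rw [pr_r] at hv
      omega
    have hd12 : Disjoint C1 CA := by
      rw [Finset.disjoint_left]
      intro z h1 h2
      rw [hC1def] at h1; rw [hCAdef] at h2
      simp only [mem_filter, mem_univ, true_and] at h1 h2
      omega
    have hd13 : Disjoint C1 CB := by
      rw [Finset.disjoint_left]
      intro z h1 h2
      rw [hC1def] at h1; rw [hCBdef] at h2
      simp only [mem_filter, mem_univ, true_and] at h1 h2
      omega
    have hd14 : Disjoint C1 C4 := by
      rw [Finset.disjoint_left]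
      intro z h1 h2
      rw [hC1def] at h1; rw [hC4def] at h2
      simp only [mem_filter, mem_univ, true_and] at h1 h2
      omega
    have hd23 : Disjoint CA CB := by
      rw [Finset.disjoint_left]
      intro z h1 h2
      rw [hCAdef] at h1; rw [hCBdef] at h2
      simp only [mem_filter, mem_univ, true_and] at h1 h2
      omega
    have hd24 : Disjoint CA C4 := by
      rw [Finset.disjoint_left]
      intro z h1 h2
      rw [hCAdef] at h1; rw [hC4def] at h2
      simp only [mem_filter, mem_univ, true_and] at h1 h2
      omega
    have hd34 : Disjoint CB C4 := by
      rw [Finset.disjoint_left]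
      intro z h1 h2
      rw [hCBdef] at h1; rw [hC4def] at h2
      simp only [mem_filter, mem_univ, true_and] at h1 h2
      omega
    have hcard1 : C1.card + CA.card + CB.card + C4.card + 1 ≤ n := by
      have hsub : ((C1 ∪ CA) ∪ (CB ∪ C4)) ⊆ univ.erase r := by
        intro v hv
        refine Finset.mem_erase.mpr ⟨?_, Finset.mem_univ v⟩
        simp only [Finset.mem_union] at hv
        rcases hv with (h | h) | h | h
        · exact (by rw [hC1def] at h; exact ((Finset.mem_filter.mp h).2).1)
        · exact hCA_ne v h
        · exact hCB_ne v h
        · exact hC4_ne v h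
      have hdU : Disjoint (C1 ∪ CA) (CB ∪ C4) := by
        rw [Finset.disjoint_union_left, Finset.disjoint_union_right, Finset.disjoint_union_right]
        exact ⟨⟨hd13, hd14⟩, hd23, hd24⟩
      have hle := Finset.card_le_card hsub
      rw [Finset.card_union_of_disjoint hdU, Finset.card_union_of_disjoint hd12,
        Finset.card_union_of_disjoint hd34, Finset.card_erase_of_mem (Finset.mem_univ r),
        card_univ] at hle
      omega
    have hd03 : Disjoint V0 V3 := by
      rw [Finset.disjoint_left]
      intro z h1 h2
      rw [hV0def] at h1; rw [hV3def] at h2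
      simp only [mem_filter, mem_univ, true_and] at h1 h2
      omega
    have hpos0 : 1 ≤ V0.card := Finset.card_pos.mpr ⟨r, hr⟩
    have hcard2 : C1.card + CA.card + 1 ≤ V0.card + V3.card := by
      have hsub : C1 ∪ CA ⊆ (V0 ∪ V3).erase r := by
        intro v hv
        refine Finset.mem_erase.mpr ⟨?_, ?_⟩
        · rcases Finset.mem_union.mp hv with h | h
          · rw [hC1def] at h; exact ((Finset.mem_filter.mp h).2).1
          · exact hCA_ne v h
        · rcases Finset.mem_union.mp hv with h | h
          · refine Finset.mem_union_left _ ?_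
            rw [hC1def] at h
            rw [hV0def]
            simp only [mem_filter, mem_univ, true_and]
            exact ((Finset.mem_filter.mp h).2).2.1
          · rw [hCAdef] at h
            simp only [mem_filter, mem_univ, true_and] at h
            rcases h with ⟨h0, _⟩ | ⟨h3, _⟩
            · exact Finset.mem_union_left _ (by rw [hV0def]; simp [h0])
            · exact Finset.mem_union_right _ (by rw [hV3def]; simp [h3])
      have hle := Finset.card_le_card hsub
      rw [Finset.card_erase_of_mem (Finset.mem_union_left _ hr),
        Finset.card_union_of_disjoint hd03, Finset.card_union_of_disjoint hd12] at hle
      omega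
    have hc3 : V0.card ≤ 2 * C1.card := by
      have hcov : V0 ⊆ C1.biUnion (fun c => {c, pr c}) := by
        intro v hv
        have hv0 : f v = 0 := by rw [hV0def] at hv; exact (Finset.mem_filter.mp hv).2
        obtain ⟨u, hadj, hu0⟩ := h0res v hv0
        rcases K2 hadj with hp | hp
        · refine Finset.mem_biUnion.mpr ⟨u, ?_, ?_⟩
          · rw [hC1def]
            simp only [mem_filter, mem_univ, true_and]
            exact ⟨prne hadj hp, hu0, by rw [hp]; exact hv0⟩
          · simp [hp]
        · refine Finset.mem_biUnion.mpr ⟨v, ?_, ?_⟩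
          · rw [hC1def]
            simp only [mem_filter, mem_univ, true_and]
            exact ⟨prne hadj.symm hp, hv0, by rw [hp]; exact hu0⟩
          · simp
      calc V0.card ≤ (C1.biUnion fun c => {c, pr c}).card := Finset.card_le_card hcov
        _ ≤ ∑ c ∈ C1, ({c, pr c} : Finset V).card := Finset.card_biUnion_le
        _ ≤ ∑ _c ∈ C1, 2 := Finset.sum_le_sum (fun c _ => (Finset.card_insert_le _ _).trans (by simp))
        _ = 2 * C1.card := by rw [Finset.sum_const, smul_eq_mul, mul_comm]
    set A := V0.filter (fun v => ∃ u, G.Adj v u ∧ f u = 3) with hAdef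
    set B := V0 \ A with hBdef
    have hAB : B.card + A.card = V0.card :=
      Finset.card_sdiff_add_card_eq_card (Finset.filter_subset _ _)
    set rec0 : V → V := fun v => if f v = 0 then v else pr v with hrec0
    have hAle : A.card ≤ CA.card := by
      apply Finset.card_le_card_of_surjOn rec0
      intro a ha
      rw [Finset.mem_coe, hAdef, Finset.mem_filter] at ha
      obtain ⟨haV0, t, hadj, ht3⟩ := ha
      have ha0 : f a = 0 := by rw [hV0def] at haV0; exact (Finset.mem_filter.mp haV0).2
      rcases K2 hadj with hp | hp
      · refine ⟨t, ?_, ?_⟩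
        · rw [Finset.mem_coe, hCAdef]
          simp only [mem_filter, mem_univ, true_and]
          right
          exact ⟨ht3, by rw [hp]; exact ha0⟩
        · simp [hrec0, ht3, hp]
      · refine ⟨a, ?_, ?_⟩
        · rw [Finset.mem_coe, hCAdef]
          simp only [mem_filter, mem_univ, true_and]
          left
          exact ⟨ha0, by rw [hp]; exact ht3⟩
        · simp [hrec0, ha0]
    set rec1 : V → V := fun v => if f v = 1 then v else pr v with hrec1
    have h1le : V1.card ≤ C4.card := by
      apply Finset.card_le_card_of_surjOn rec1
      intro v hv
      rw [Finset.mem_coe, hV1def, Finset.mem_filter] at hv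
      have hv1 : f v = 1 := hv.2
      obtain ⟨u, hadj, hu2⟩ := h1dom v hv1
      rcases K2 hadj with hp | hp
      · refine ⟨u, ?_, ?_⟩
        · rw [Finset.mem_coe, hC4def]
          simp only [mem_filter, mem_univ, true_and]
          right
          exact ⟨hu2, by rw [hp]; exact hv1⟩
        · have hu1 : f u ≠ 1 := by omega
          simp [hrec1, hu1, hp]
      · refine ⟨v, ?_, ?_⟩
        · rw [Finset.mem_coe, hC4def]
          simp only [mem_filter, mem_univ, true_and]
          left
          exact ⟨hv1, by rw [hp]; exact hu2⟩
        · simp [hrec1, hv1]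
    have hBle : 2 * B.card ≤ CB.card := by
      set CB' := CB.filter (fun c => rec0 c ∈ B) with hCB'def
      have hfib : CB'.card = ∑ b ∈ B, (CB'.filter (fun c => rec0 c = b)).card :=
        Finset.card_eq_sum_card_fiberwise (fun c hc => (Finset.mem_filter.mp hc).2)
      have h2 : ∀ b ∈ B, 2 ≤ (CB'.filter (fun c => rec0 c = b)).card := by
        intro b hb
        rw [hBdef, Finset.mem_sdiff] at hb
        obtain ⟨hbV0, hnA⟩ := hb
        have hb0 : f b = 0 := by rw [hV0def] at hbV0; exact (Finset.mem_filter.mp hbV0).2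
        rcases h0dom b hb0 with h3 | ⟨u, w, hbu, hbw, huw, hu2, hw2⟩
        · exact absurd (by rw [hAdef]; exact Finset.mem_filter.mpr ⟨hbV0, h3⟩) hnA
        have hbB : b ∈ B := by rw [hBdef, Finset.mem_sdiff]; exact ⟨hbV0, hnA⟩
        have hmemCB : ∀ c, ((f c = 0 ∧ f (pr c) = 2) ∨ (f c = 2 ∧ f (pr c) = 0)) →
            rec0 c = b → c ∈ CB'.filter (fun c => rec0 c = b) := by
          intro c hc hrc
          refine Finset.mem_filter.mpr ⟨Finset.mem_filter.mpr ⟨?_, by rw [hrc]; exact hbB⟩, hrc⟩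
          rw [hCBdef]
          simp only [mem_filter, mem_univ, true_and]
          exact hc
        have pair_le : ∀ c d : V, c ≠ d → c ∈ CB'.filter (fun c => rec0 c = b) →
            d ∈ CB'.filter (fun c => rec0 c = b) → 2 ≤ (CB'.filter (fun c => rec0 c = b)).card := by
          intro c d hcd h1 h2
          calc 2 = ({c, d} : Finset V).card := (Finset.card_pair hcd).symm
            _ ≤ _ := Finset.card_le_card
                (Finset.insert_subset_iff.mpr ⟨h1, Finset.singleton_subset_iff.mpr h2⟩)
        rcases K2 hbu with hpu | hpu <;> rcases K2 hbw with hpw | hpw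
        · refine pair_le u w huw ?_ ?_
          · exact hmemCB u (Or.inr ⟨hu2, by rw [hpu]; exact hb0⟩)
              (by simp [hrec0, show f u ≠ 0 by omega, hpu])
          · exact hmemCB w (Or.inr ⟨hw2, by rw [hpw]; exact hb0⟩)
              (by simp [hrec0, show f w ≠ 0 by omega, hpw])
        · refine pair_le u b hbu.ne' ?_ ?_
          · exact hmemCB u (Or.inr ⟨hu2, by rw [hpu]; exact hb0⟩)
              (by simp [hrec0, show f u ≠ 0 by omega, hpu])
          · exact hmemCB b (Or.inl ⟨hb0, by rw [hpw]; exact hw2⟩) (by simp [hrec0, hb0])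
        · refine pair_le b w hbw.ne ?_ ?_
          · exact hmemCB b (Or.inl ⟨hb0, by rw [hpu]; exact hu2⟩) (by simp [hrec0, hb0])
          · exact hmemCB w (Or.inr ⟨hw2, by rw [hpw]; exact hb0⟩)
              (by simp [hrec0, show f w ≠ 0 by omega, hpw])
        · exact absurd (hpu.symm.trans hpw) huw
      calc 2 * B.card = ∑ _b ∈ B, 2 := by rw [Finset.sum_const, smul_eq_mul, mul_comm]
        _ ≤ ∑ b ∈ B, (CB'.filter (fun c => rec0 c = b)).card := Finset.sum_le_sum h2
        _ = CB'.card := hfib.symm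
        _ ≤ CB.card := Finset.card_le_card (Finset.filter_subset _ _)
    omega
end
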